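/- arXiv:1212.3448 — 3 statements merged into one kernel-verified Lean document; each statement's English description precedes it below -/
import Mathlib

section
/- For all 0 < y ≤ 1, the half-plane growth constant with surface fugacity y satisfies μ(y) = μ, where μ is the growth constant of self-avoiding walks on ℤ². -/
open Filter

/-- `IsSAW d n w` : `w` is an `n`-step self-avoiding walk on `ℤ^d`,
i.e. an injective map from `{0,…,n}` to `ℤ^d` starting at the origin whose
consecutive points are at `ℓ¹` distance `1`. -/
def IsSAW (d n : ℕ) (w : Fin (n + 1) → Fin d → ℤ) : Prop :=
  Function.Injective w ∧ w 0 = 0 ∧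
    ∀ i : Fin n, (∑ k, |w i.succ k - w i.castSucc k|) = 1

/-- `sawCount d n` : the number `c_n` of `n`-step self-avoiding walks on `ℤ^d`. -/
noncomputable def sawCount (d n : ℕ) : ℕ :=
  Nat.card {w : Fin (n + 1) → Fin d → ℤ // IsSAW d n w}

/-- An `n`-step half-plane self-avoiding walk on `ℤ²`: a SAW staying in the
upper half-plane `{(x₁,x₂) : x₂ ≥ 0}`. -/
def IsHalfPlaneSAW (n : ℕ) (w : Fin (n + 1) → Fin 2 → ℤ) : Prop :=
  IsSAW 2 n w ∧ ∀ i, 0 ≤ w i 1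

/-- `hpCount n i` : the number `c_n^+(i)` of `n`-step half-plane SAWs having
exactly `i` vertices on the surface (i.e. indices `j` with `w(j)₂ = 0`). -/
noncomputable def hpCount (n i : ℕ) : ℕ :=
  Nat.card {w : Fin (n + 1) → Fin 2 → ℤ // IsHalfPlaneSAW n w ∧
    (Finset.univ.filter fun j => w j 1 = 0).card = i}

/-- `hpPartition n y` : the partition function `C_n^+(y) = Σ_i c_n^+(i) y^i`. -/
noncomputable def hpPartition (n : ℕ) (y : ℝ) : ℝ :=
  ∑ i ∈ Finset.range (n + 2), (hpCount n i : ℝ) * y ^ i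

open Function

section aux

lemma IsSAW.step {d n} {w : Fin (n+1) → Fin d → ℤ} (hw : IsSAW d n w)
    {i : ℕ} (h : i < n) :
    (∑ k, |w ⟨i+1, by omega⟩ k - w ⟨i, by omega⟩ k|) = 1 :=
  hw.2.2 ⟨i, h⟩

lemma IsSAW.step_single {d n} {w : Fin (n+1) → Fin d → ℤ} (hw : IsSAW d n w)
    {i : ℕ} (h : i < n) (k : Fin d) :
    |w ⟨i+1, by omega⟩ k - w ⟨i, by omega⟩ k| ≤ 1 := by
  have h2 := hw.step h
  calc |w ⟨i+1, by omega⟩ k - w ⟨i, by omega⟩ k|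
      ≤ ∑ k', |w ⟨i+1, by omega⟩ k' - w ⟨i, by omega⟩ k'| :=
        Finset.single_le_sum (f := fun k' => |w ⟨i+1, by omega⟩ k' - w ⟨i, by omega⟩ k'|)
          (fun _ _ => abs_nonneg _) (Finset.mem_univ k)
    _ = 1 := h2

lemma IsSAW.bound {d n} {w : Fin (n+1) → Fin d → ℤ} (hw : IsSAW d n w)
    (i : ℕ) (hi : i < n + 1) (k : Fin d) : |w ⟨i, hi⟩ k| ≤ (i : ℤ) := by
  induction i with
  | zero =>
    have h0 : w 0 = 0 := hw.2.1
    have : (⟨0, hi⟩ : Fin (n+1)) = 0 := rfl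
    simp [this, h0]
  | succ m ih =>
    have hm : m < n + 1 := by omega
    have h1 := hw.step_single (show m < n by omega) k
    have h2 := ih hm
    have h3 := abs_sub_abs_le_abs_sub (w ⟨m+1, hi⟩ k) (w ⟨m, hm⟩ k)
    push_cast
    omega


instance sawFinite (d n : ℕ) : Finite {w : Fin (n+1) → Fin d → ℤ // IsSAW d n w} := by
  let f : {w : Fin (n+1) → Fin d → ℤ // IsSAW d n w} →
      (Fin (n+1) → Fin d → Finset.Icc (-(n:ℤ)) (n:ℤ)) := fun ⟨w, hw⟩ i k =>
    ⟨w i k, by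
      simp only [Finset.mem_coe, Finset.mem_Icc]
      have := hw.bound i.val i.isLt k
      have hv : (i : ℤ) ≤ (n : ℤ) := by exact_mod_cast Nat.le_of_lt_succ i.isLt
      have := abs_le.mp (le_trans (by simpa using hw.bound i.val i.isLt k) hv)
      exact this⟩
  have hf : Injective f := by
    rintro ⟨w, hw⟩ ⟨w', hw'⟩ h
    ext i k
    have := congrFun (congrFun h i) k
    simpa [f] using congrArg Subtype.val this
  exact Finite.of_injective f hf


noncomputable def hpTotal (n : ℕ) : ℕ :=
  Nat.card {w : Fin (n + 1) → Fin 2 → ℤ // IsHalfPlaneSAW n w}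

instance hpFinite (n : ℕ) : Finite {w : Fin (n+1) → Fin 2 → ℤ // IsHalfPlaneSAW n w} :=
  Finite.of_injective (fun p => (⟨p.val, p.prop.1⟩ : {w : Fin (n+1) → Fin 2 → ℤ // IsSAW 2 n w}))
    (fun a b h => by apply Subtype.ext; injection h)

instance hpcFinite (n i : ℕ) : Finite {w : Fin (n+1) → Fin 2 → ℤ // IsHalfPlaneSAW n w ∧
    (Finset.univ.filter fun j => w j 1 = 0).card = i} :=
  Finite.of_injective
    (fun p => (⟨p.val, p.prop.1⟩ : {w : Fin (n+1) → Fin 2 → ℤ // IsHalfPlaneSAW n w}))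
    (fun a b h => by apply Subtype.ext; injection h)

lemma nat_card_sigma {ι : Type*} [Fintype ι] (f : ι → Type*) [∀ i, Finite (f i)] :
    Nat.card (Σ i, f i) = ∑ i, Nat.card (f i) := by
  letI : ∀ i, Fintype (f i) := fun i => Fintype.ofFinite _
  simp [Nat.card_eq_fintype_card, Fintype.card_sigma]

lemma hpTotal_le_sawCount (n : ℕ) : hpTotal n ≤ sawCount 2 n :=
  Nat.card_le_card_of_injective
    (fun p => (⟨p.val, p.prop.1⟩ : {w : Fin (n+1) → Fin 2 → ℤ // IsSAW 2 n w}))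
    (fun a b h => by apply Subtype.ext; injection h)

lemma sum_hpCount (n : ℕ) : ∑ i ∈ Finset.range (n + 2), hpCount n i = hpTotal n := by
  classical
  have hcard : ∀ w : Fin (n+1) → Fin 2 → ℤ,
      (Finset.univ.filter fun j => w j 1 = 0).card < n + 2 := by
    intro w
    calc (Finset.univ.filter fun j => w j 1 = 0).card ≤ Finset.univ.card :=
          Finset.card_le_card (Finset.filter_subset _ _)
      _ = n + 1 := by simp
      _ < n + 2 := by omega
  have := nat_card_sigma (fun i : Fin (n+2) =>
    {w : Fin (n+1) → Fin 2 → ℤ // IsHalfPlaneSAW n w ∧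
      (Finset.univ.filter fun j => w j 1 = 0).card = i.val})
  have hequiv : (Σ i : Fin (n+2), {w : Fin (n+1) → Fin 2 → ℤ // IsHalfPlaneSAW n w ∧
      (Finset.univ.filter fun j => w j 1 = 0).card = i.val}) ≃
      {w : Fin (n+1) → Fin 2 → ℤ // IsHalfPlaneSAW n w} := by
    refine ⟨fun p => ⟨p.2.val, p.2.prop.1⟩,
      fun q => ⟨⟨(Finset.univ.filter fun j => q.val j 1 = 0).card, hcard _⟩,
        ⟨q.val, q.prop, rfl⟩⟩, ?_, ?_⟩
    · rintro ⟨⟨iv, hlt⟩, ⟨w, hw, hc⟩⟩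
      dsimp only [Fin.val_mk] at hc
      subst hc
      rfl
    · rintro ⟨w, hw⟩
      rfl
  have h2 := Nat.card_congr hequiv
  rw [this] at h2
  rw [hpTotal, ← h2, Finset.sum_range fun i => hpCount n i]
  rfl


/-- unit vector in direction 1 -/
def e2 : Fin 2 → ℤ := fun k => if k = 1 then 1 else 0

lemma hpTotal_le_hpCount_one (m : ℕ) : hpTotal m ≤ hpCount (m+1) 1 := by
  apply Nat.card_le_card_of_injective (f := fun
      (p : {w : Fin (m+1) → Fin 2 → ℤ // IsHalfPlaneSAW m w}) =>
    (⟨fun i k => if h : i.val = 0 then 0 else p.val ⟨i.val - 1, by omega⟩ k + e2 k, by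
      obtain ⟨v, hv, hv2⟩ := p
      have key : ∀ j : ℕ, ∀ hj : j < m + 1,
          (fun (i : Fin (m+2)) k => if h : i.val = 0 then 0
            else v ⟨i.val - 1, by omega⟩ k + e2 k) ⟨j+1, by omega⟩ = v ⟨j, hj⟩ + e2 := by
        intro j hj; funext k; simp
      constructor
      constructor
      · -- injective
        intro a b h
        rcases Nat.eq_zero_or_pos a.val with ha | ha <;>
          rcases Nat.eq_zero_or_pos b.val with hb | hb
        · exact Fin.ext (by omega)
        · exfalso
          have := congrFun h 1
          simp only [ha, hb] at this
          simp [show ¬ (b.val = 0) by omega, e2] at this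
          have := hv2 ⟨b.val - 1, by omega⟩
          omega
        · exfalso
          have := congrFun h 1
          simp only [ha, hb] at this
          simp [show ¬ (a.val = 0) by omega, e2] at this
          have := hv2 ⟨a.val - 1, by omega⟩
          omega
        · have h2 : v ⟨a.val - 1, by omega⟩ = v ⟨b.val - 1, by omega⟩ := by
            funext k
            have := congrFun h k
            simp [show ¬ (a.val = 0) by omega, show ¬ (b.val = 0) by omega] at this
            linarith
          have h3 := congrArg Fin.val (hv.1 h2)
          simp only [Fin.val_mk] at h3
          exact Fin.ext (by omega)
      constructor
      · funext k; simp
      · -- steps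
        intro i
        rcases Nat.eq_zero_or_pos i.val with hi | hi
        · have : ∀ k, (if h : (i.succ.val = 0) then (0:ℤ)
              else v ⟨i.succ.val - 1, by omega⟩ k + e2 k)
              - (if h : (i.castSucc.val = 0) then 0
              else v ⟨i.castSucc.val - 1, by omega⟩ k + e2 k) = e2 k := by
            intro k
            have h1 : i.succ.val = 1 := by simp [hi]
            have h2 : i.castSucc.val = 0 := by simp [hi]
            have h0 : v 0 k = 0 := by rw [hv.2.1]; rfl
            simp [h1, h2, hi, show i = ⟨0, by omega⟩ from Fin.ext hi, h0]
          simp only [this]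
          simp [e2]
        · have hlt : i.val - 1 < m := by omega
          have := hv.step hlt
          have e1 : ∀ k, (if h : (i.succ.val = 0) then (0:ℤ)
              else v ⟨i.succ.val - 1, by omega⟩ k + e2 k)
              - (if h : (i.castSucc.val = 0) then 0
              else v ⟨i.castSucc.val - 1, by omega⟩ k + e2 k)
              = v ⟨i.val - 1 + 1, by omega⟩ k - v ⟨i.val - 1, by omega⟩ k := by
            intro k
            have h1 : i.succ.val = i.val + 1 := rfl
            have h2 : i.castSucc.val = i.val := rfl
            simp only [h1, h2, show ¬ (i.val + 1 = 0) by omega, show ¬ (i.val = 0) by omega,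
              dite_false]
            have : (⟨i.val + 1 - 1, by omega⟩ : Fin (m+1)) = ⟨i.val - 1 + 1, by omega⟩ :=
              Fin.ext (by simp; omega)
            rw [this]
            ring
          simp only [e1]
          exact this
      · -- half-plane
        intro i
        rcases Nat.eq_zero_or_pos i.val with hi | hi
        · simp [hi]
        · simp [show ¬ (i.val = 0) by omega, e2]
          have := hv2 ⟨i.val - 1, by omega⟩
          omega
      , by
      -- exactly one contact
      obtain ⟨v, hv, hv2⟩ := p
      have : (Finset.univ.filter fun (j : Fin (m+2)) =>
          (if h : j.val = 0 then (0:ℤ) else v ⟨j.val - 1, by omega⟩ 1 + e2 1) = 0) = {0} := by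
        apply Finset.ext
        intro j
        simp only [Finset.mem_filter, Finset.mem_univ, true_and, Finset.mem_singleton]
        constructor
        · intro hj
          by_contra hne
          have hjv : ¬ (j.val = 0) := fun h => hne (Fin.ext h)
          simp [hjv, e2] at hj
          have := hv2 ⟨j.val - 1, by omega⟩
          omega
        · intro hj; subst hj; simp
      simp only [this]
      rfl⟩ :
    {w : Fin (m+2) → Fin 2 → ℤ // IsHalfPlaneSAW (m+1) w ∧
      (Finset.univ.filter fun j => w j 1 = 0).card = 1}))
  -- injectivity of the map itself
  rintro ⟨v, hv⟩ ⟨v', hv'⟩ h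
  apply Subtype.ext
  funext i k
  have := congrFun (congrFun (congrArg Subtype.val h) ⟨i.val + 1, by omega⟩) k
  simp only [Fin.val_mk] at this
  simp [show ¬ (i.val + 1 = 0) by omega] at this
  exact this


abbrev HP (n : ℕ) := {w : Fin (n+1) → Fin 2 → ℤ // IsHalfPlaneSAW n w}

def splitA (n : ℕ) (w : Fin (n+1) → Fin 2 → ℤ) (j : Fin (n+1)) :
    Fin (j.val + 1) → Fin 2 → ℤ :=
  fun t k => w ⟨j.val - t.val, by omega⟩ k - w j k

def splitB (n : ℕ) (w : Fin (n+1) → Fin 2 → ℤ) (j : Fin (n+1)) :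
    Fin ((n - j.val) + 1) → Fin 2 → ℤ :=
  fun t k => w ⟨j.val + t.val, by have := t.isLt; have := j.isLt; omega⟩ k - w j k

lemma splitA_isHP {n : ℕ} {w : Fin (n+1) → Fin 2 → ℤ} (hw : IsSAW 2 n w)
    (j : Fin (n+1)) (hmin : ∀ i', w j 1 ≤ w i' 1) :
    IsHalfPlaneSAW j.val (splitA n w j) := by
  unfold splitA
  refine ⟨⟨?_, ?_, ?_⟩, ?_⟩
  · intro a b h
    have h2 : w ⟨j.val - a.val, by omega⟩ = w ⟨j.val - b.val, by omega⟩ := by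
      funext k
      have := congrFun h k
      dsimp at this
      linarith
    have h3 := congrArg Fin.val (hw.1 h2)
    simp only [Fin.val_mk] at h3
    have ha := a.isLt
    have hb := b.isLt
    exact Fin.ext (by omega)
  · funext k
    have e0 : (⟨j.val - ((0 : Fin (j.val + 1)) : ℕ), by omega⟩ : Fin (n+1)) = j :=
      Fin.ext (by simp)
    show w ⟨j.val - ((0 : Fin (j.val + 1)) : ℕ), by omega⟩ k - w j k = 0
    rw [e0]; ring
  · intro i
    have hi := i.isLt
    have e1 : ∀ k, w ⟨j.val - i.succ.val, by omega⟩ k - w j k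
        - (w ⟨j.val - i.castSucc.val, by omega⟩ k - w j k)
        = -(w ⟨(j.val - i.val - 1) + 1, by omega⟩ k - w ⟨j.val - i.val - 1, by omega⟩ k) := by
      intro k
      have h1 : i.succ.val = i.val + 1 := rfl
      have h2 : i.castSucc.val = i.val := rfl
      have e2 : (⟨j.val - i.succ.val, by omega⟩ : Fin (n+1)) =
          ⟨j.val - i.val - 1, by omega⟩ := Fin.ext (by simp only [h1, Fin.val_mk] <;> omega)
      have e3 : (⟨j.val - i.castSucc.val, by omega⟩ : Fin (n+1)) =
          ⟨(j.val - i.val - 1) + 1, by omega⟩ := Fin.ext (by simp only [h2, Fin.val_mk] <;> omega)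
      rw [e2, e3]
      ring
    simp only [e1, abs_neg]
    exact hw.step (by omega)
  · intro t
    dsimp only
    have := hmin ⟨j.val - t.val, by omega⟩
    omega

lemma splitB_isHP {n : ℕ} {w : Fin (n+1) → Fin 2 → ℤ} (hw : IsSAW 2 n w)
    (j : Fin (n+1)) (hmin : ∀ i', w j 1 ≤ w i' 1) :
    IsHalfPlaneSAW (n - j.val) (splitB n w j) := by
  unfold splitB
  have hjn := j.isLt
  refine ⟨⟨?_, ?_, ?_⟩, ?_⟩
  · intro a b h
    have ha := a.isLt
    have hb := b.isLt
    have h2 : w ⟨j.val + a.val, by omega⟩ = w ⟨j.val + b.val, by omega⟩ := by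
      funext k
      have := congrFun h k
      dsimp at this
      linarith
    have h3 := congrArg Fin.val (hw.1 h2)
    simp only [Fin.val_mk] at h3
    exact Fin.ext (by omega)
  · funext k
    have e0 : (⟨j.val + ((0 : Fin ((n - j.val) + 1)) : ℕ), by omega⟩ : Fin (n+1)) = j :=
      Fin.ext (by simp)
    show w ⟨j.val + ((0 : Fin ((n - j.val) + 1)) : ℕ), by omega⟩ k - w j k = 0
    rw [e0]; ring
  · intro i
    have hi := i.isLt
    have e1 : ∀ k, w ⟨j.val + i.succ.val, by omega⟩ k - w j k
        - (w ⟨j.val + i.castSucc.val, by omega⟩ k - w j k)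
        = w ⟨(j.val + i.val) + 1, by omega⟩ k - w ⟨j.val + i.val, by omega⟩ k := by
      intro k
      have h1 : i.succ.val = i.val + 1 := rfl
      have h2 : i.castSucc.val = i.val := rfl
      have e2 : (⟨j.val + i.succ.val, by omega⟩ : Fin (n+1)) =
          ⟨(j.val + i.val) + 1, by omega⟩ := Fin.ext (by simp only [h1, Fin.val_mk] <;> omega)
      have e3 : (⟨j.val + i.castSucc.val, by omega⟩ : Fin (n+1)) =
          ⟨j.val + i.val, by omega⟩ := Fin.ext (by simp only [h2, Fin.val_mk] <;> omega)
      rw [e2, e3]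
      ring
    simp only [e1]
    exact hw.step (by omega)
  · intro t
    dsimp only
    have := hmin ⟨j.val + t.val, by have := t.isLt; omega⟩
    omega

noncomputable def argminJ (n : ℕ) (w : Fin (n+1) → Fin 2 → ℤ) : Fin (n+1) := by
  classical
  exact (Finset.univ.filter fun i => ∀ i', w i 1 ≤ w i' 1).min' (by
    obtain ⟨i, -, hi⟩ := Finset.exists_min_image Finset.univ (fun i => w i 1)
      ⟨0, Finset.mem_univ 0⟩
    exact ⟨i, by
      simp only [Finset.mem_filter, Finset.mem_univ, true_and]
      exact fun i' => hi i' (Finset.mem_univ i')⟩)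

lemma argminJ_min (n : ℕ) (w : Fin (n+1) → Fin 2 → ℤ) (i' : Fin (n+1)) :
    w (argminJ n w) 1 ≤ w i' 1 := by
  classical
  have := Finset.min'_mem (Finset.univ.filter fun i => ∀ i', w i 1 ≤ w i' 1)
    (by
      obtain ⟨i, -, hi⟩ := Finset.exists_min_image Finset.univ (fun i => w i 1)
        ⟨0, Finset.mem_univ 0⟩
      exact ⟨i, by
        simp only [Finset.mem_filter, Finset.mem_univ, true_and]
        exact fun i' => hi i' (Finset.mem_univ i')⟩)
  simp only [Finset.mem_filter, Finset.mem_univ, true_and] at this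
  exact this i'

noncomputable def splitMap (n : ℕ) (p : {w : Fin (n+1) → Fin 2 → ℤ // IsSAW 2 n w}) :
    Σ j : Fin (n+1), HP j.val × HP (n - j.val) :=
  ⟨argminJ n p.val,
    (⟨splitA n p.val (argminJ n p.val),
      splitA_isHP p.prop (argminJ n p.val) (argminJ_min n p.val)⟩,
     ⟨splitB n p.val (argminJ n p.val),
      splitB_isHP p.prop (argminJ n p.val) (argminJ_min n p.val)⟩)⟩

noncomputable def recon (n : ℕ) (q : Σ j : Fin (n+1), HP j.val × HP (n - j.val)) :
    Fin (n+1) → Fin 2 → ℤ := fun i k =>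
  if h : i.val ≤ q.1.val then
    q.2.1.val ⟨q.1.val - i.val, by omega⟩ k - q.2.1.val ⟨q.1.val, by omega⟩ k
  else
    q.2.2.val ⟨i.val - q.1.val, by have := i.isLt; have := q.1.isLt; omega⟩ k
      - q.2.1.val ⟨q.1.val, by omega⟩ k

lemma recon_splitMap (n : ℕ) (p : {w : Fin (n+1) → Fin 2 → ℤ // IsSAW 2 n w}) :
    recon n (splitMap n p) = p.val := by
  obtain ⟨w, hw⟩ := p
  funext i k
  unfold recon splitMap splitA splitB
  dsimp only
  set j := argminJ n w with hj
  have hAj : w ⟨j.val - (⟨j.val, by omega⟩ : Fin (j.val + 1)).val, by omega⟩ k - w j k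
      = - w j k := by
    have e0 : (⟨j.val - (⟨j.val, by omega⟩ : Fin (j.val + 1)).val, by omega⟩ : Fin (n+1)) = 0 :=
      Fin.ext (by simp)
    rw [e0, hw.2.1]
    simp
  by_cases h : i.val ≤ j.val
  · rw [dif_pos h]
    have e1 : (⟨j.val - (⟨j.val - i.val, by omega⟩ : Fin (j.val + 1)).val, by omega⟩ :
        Fin (n+1)) = i := Fin.ext (by simp; omega)
    rw [e1, hAj]
    ring
  · rw [dif_neg h]
    have e1 : (⟨j.val + (⟨i.val - j.val, by have := i.isLt; have := j.isLt; omega⟩ :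
        Fin ((n - j.val) + 1)).val, by have := i.isLt; have := j.isLt; omega⟩ :
        Fin (n+1)) = i := Fin.ext (by simp; omega)
    rw [e1, hAj]
    ring

lemma sawCount_le_sum_hpTotal (n : ℕ) :
    sawCount 2 n ≤ ∑ j ∈ Finset.range (n + 1), hpTotal j * hpTotal (n - j) := by
  classical
  have hinj : Function.Injective (splitMap n) := by
    intro a b hab
    apply Subtype.ext
    rw [← recon_splitMap n a, ← recon_splitMap n b, hab]
  have key := Nat.card_le_card_of_injective (splitMap n) hinj
  rw [sawCount]
  refine le_trans key ?_
  rw [nat_card_sigma]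
  rw [Finset.sum_range fun j => hpTotal j * hpTotal (n - j)]
  apply le_of_eq
  apply Finset.sum_congr rfl
  intro j _
  rw [Nat.card_prod]
  rfl


lemma sawCount_submult (d n m : ℕ) : sawCount d (n + m) ≤ sawCount d n * sawCount d m := by
  simp only [sawCount]
  rw [← Nat.card_prod]
  apply Nat.card_le_card_of_injective
    (f := fun (p : {w : Fin (n+m+1) → Fin d → ℤ // IsSAW d (n+m) w}) =>
      ((⟨fun i k => p.val ⟨i.val, by omega⟩ k, by
        obtain ⟨w, hw⟩ := p
        refine ⟨?_, ?_, ?_⟩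
        · intro a b h
          have h2 : w ⟨a.val, by omega⟩ = w ⟨b.val, by omega⟩ := funext fun k => congrFun h k
          have h3 := congrArg Fin.val (hw.1 h2)
          exact Fin.ext h3
        · funext k
          have h0 : (⟨((0 : Fin (n+1)) : ℕ), by omega⟩ : Fin (n+m+1)) = 0 := by
            apply Fin.ext; simp
          show w ⟨((0 : Fin (n+1)) : ℕ), by omega⟩ k = 0
          rw [h0, hw.2.1]
          rfl
        · intro i
          exact hw.step (by omega)⟩ :
        {w : Fin (n+1) → Fin d → ℤ // IsSAW d n w}),
      (⟨fun j k => p.val ⟨n + j.val, by omega⟩ k - p.val ⟨n, by omega⟩ k, by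
        obtain ⟨w, hw⟩ := p
        refine ⟨?_, ?_, ?_⟩
        · intro a b h
          have h2 : w ⟨n + a.val, by omega⟩ = w ⟨n + b.val, by omega⟩ := by
            funext k
            have := congrFun h k
            dsimp at this
            linarith
          have := congrArg Fin.val (hw.1 h2)
          simp only [Fin.val_mk] at this
          exact Fin.ext (by omega)
        · funext k; simp
        · intro j
          have := hw.step (i := n + j.val) (by omega)
          simp at this ⊢; exact this⟩ :
        {w : Fin (m+1) → Fin d → ℤ // IsSAW d m w})))
  rintro ⟨w, hw⟩ ⟨w', hw'⟩ h
  simp only [Prod.mk.injEq, Subtype.mk.injEq] at h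
  obtain ⟨hA, hB⟩ := h
  apply Subtype.ext
  funext i k
  by_cases hle : i.val ≤ n
  · have := congrFun (congrFun hA ⟨i.val, by omega⟩) k
    simpa [show (⟨i.val, by omega⟩ : Fin (n+m+1)) = i from Fin.ext rfl] using this
  · have hn : w ⟨n, by omega⟩ k = w' ⟨n, by omega⟩ k := by
      have := congrFun (congrFun hA ⟨n, by omega⟩) k
      simpa using this
    have ht : i.val - n ≤ m := by omega
    have := congrFun (congrFun hB ⟨i.val - n, by omega⟩) k
    dsimp at this
    have hidx : (⟨n + (i.val - n), by omega⟩ : Fin (n+m+1)) = i := Fin.ext (by simp; omega)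
    rw [hidx] at this
    linarith


section analysis
variable {y : ℝ} (hy0 : 0 < y) (hy1 : y ≤ 1)

lemma hpPartition_nonneg (n : ℕ) (hy : 0 ≤ y) : 0 ≤ hpPartition n y :=
  Finset.sum_nonneg fun i _ => mul_nonneg (Nat.cast_nonneg _) (pow_nonneg hy i)

lemma hpPartition_le_sawCount (n : ℕ) (hy0 : 0 ≤ y) (hy1 : y ≤ 1) :
    hpPartition n y ≤ (sawCount 2 n : ℝ) := by
  have h1 : hpPartition n y ≤ ∑ i ∈ Finset.range (n + 2), (hpCount n i : ℝ) := by
    apply Finset.sum_le_sum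
    intro i _
    exact mul_le_of_le_one_right (Nat.cast_nonneg _) (pow_le_one₀ hy0 hy1)
  have h2 : ∑ i ∈ Finset.range (n + 2), (hpCount n i : ℝ) = ((hpTotal n : ℕ) : ℝ) := by
    rw [← sum_hpCount n]
    push_cast
    rfl
  rw [h2] at h1
  exact h1.trans (by exact_mod_cast Nat.cast_le.mpr (hpTotal_le_sawCount n))

lemma le_hpPartition (m : ℕ) (hy0 : 0 ≤ y) : (hpTotal m : ℝ) * y ≤ hpPartition (m+1) y := by
  have h1 : (hpCount (m+1) 1 : ℝ) * y ^ 1 ≤ hpPartition (m+1) y := by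
    apply Finset.single_le_sum (f := fun i => (hpCount (m+1) i : ℝ) * y ^ i)
    · intro i _
      exact mul_nonneg (Nat.cast_nonneg _) (pow_nonneg hy0 i)
    · simp only [Finset.mem_range]; omega
  calc (hpTotal m : ℝ) * y ≤ (hpCount (m+1) 1 : ℝ) * y := by
        apply mul_le_mul_of_nonneg_right _ hy0
        exact_mod_cast hpTotal_le_hpCount_one m
    _ = (hpCount (m+1) 1 : ℝ) * y ^ 1 := by ring
    _ ≤ hpPartition (m+1) y := h1

lemma sawCount_pow_le (n : ℕ) : ∀ k : ℕ, 1 ≤ k → sawCount 2 (k * n) ≤ (sawCount 2 n) ^ k := by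
  intro k
  induction k with
  | zero => omega
  | succ k ih =>
    intro _
    rcases Nat.eq_zero_or_pos k with hk | hk
    · subst hk; simpa using le_refl _
    · calc sawCount 2 ((k+1) * n) = sawCount 2 (k * n + n) := by ring_nf
        _ ≤ sawCount 2 (k * n) * sawCount 2 n := sawCount_submult 2 (k*n) n
        _ ≤ (sawCount 2 n)^k * sawCount 2 n :=
            Nat.mul_le_mul_right _ (ih hk)
        _ = (sawCount 2 n)^(k+1) := by ring

lemma mu_le_root {μ : ℝ}
    (hμ : Tendsto (fun n : ℕ => (sawCount 2 n : ℝ) ^ (1 / (n : ℝ))) atTop (nhds μ))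
    (n : ℕ) (hn : 1 ≤ n) : μ ≤ (sawCount 2 n : ℝ) ^ (1 / (n : ℝ)) := by
  have hsub : Tendsto (fun k : ℕ => k * n) atTop atTop :=
    Tendsto.atTop_mul_const' (by omega) tendsto_id |>.congr (fun k => rfl)
  have hcomp : Tendsto (fun k : ℕ => (sawCount 2 (k * n) : ℝ) ^ (1 / ((k * n : ℕ) : ℝ)))
      atTop (nhds μ) := hμ.comp hsub
  apply le_of_tendsto hcomp
  filter_upwards [eventually_ge_atTop 1] with k hk
  have h1 : (sawCount 2 (k * n) : ℝ) ≤ ((sawCount 2 n : ℝ) ^ k) := by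
    exact_mod_cast sawCount_pow_le n k hk
  have hkn : (0:ℝ) < ((k * n : ℕ) : ℝ) := by
    have : 1 ≤ k * n := Nat.one_le_iff_ne_zero.mpr (by positivity)
    exact_mod_cast Nat.lt_of_lt_of_le Nat.zero_lt_one this
  calc (sawCount 2 (k * n) : ℝ) ^ (1 / ((k * n : ℕ) : ℝ))
      ≤ ((sawCount 2 n : ℝ) ^ k) ^ (1 / ((k * n : ℕ) : ℝ)) := by
        apply Real.rpow_le_rpow (Nat.cast_nonneg _) h1 (by positivity)
    _ = (sawCount 2 n : ℝ) ^ ((k : ℝ) * (1 / ((k * n : ℕ) : ℝ))) := by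
        rw [← Real.rpow_natCast ((sawCount 2 n : ℝ)) k, ← Real.rpow_mul (Nat.cast_nonneg _)]
    _ = (sawCount 2 n : ℝ) ^ (1 / (n : ℝ)) := by
        congr 1
        have hk0 : (k:ℝ) ≠ 0 := by positivity
        have hn0 : (n:ℝ) ≠ 0 := by
          have : (0:ℕ) < n := hn
          positivity
        push_cast
        field_simp
end analysis

end aux

set_option maxHeartbeats 1000000 in
/-- for all `0 < y ≤ 1`, the half-plane growth constant with
surface fugacity `y` satisfies `μ(y) = μ`, where `μ` is the growth constant of
SAWs on `ℤ²`. -/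
theorem hp_growth_constant_eq (μ : ℝ)
    (hμ : Filter.Tendsto (fun n : ℕ => (sawCount 2 n : ℝ) ^ (1 / (n : ℝ)))
      Filter.atTop (nhds μ))
    (y : ℝ) (hy0 : 0 < y) (hy1 : y ≤ 1) (μy : ℝ)
    (hμy : Filter.Tendsto (fun n : ℕ => hpPartition n y ^ (1 / (n : ℝ)))
      Filter.atTop (nhds μy)) :
    μy = μ := by
  apply le_antisymm
  · apply le_of_tendsto_of_tendsto' hμy hμ
    intro n
    exact Real.rpow_le_rpow (hpPartition_nonneg n hy0.le)
      (hpPartition_le_sawCount n hy0.le hy1) (by positivity)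
  · have hμy0 : 0 ≤ μy := ge_of_tendsto' hμy fun n =>
      Real.rpow_nonneg (hpPartition_nonneg n hy0.le) _
    apply le_of_forall_pos_le_add
    intro ε hε
    set ρ := μy + ε with hρ
    have hρ0 : 0 < ρ := by dsimp [ρ]; linarith
    have hev : ∀ᶠ m in atTop, hpPartition m y ^ (1/(m:ℝ)) < ρ :=
      hμy.eventually_lt_const (by dsimp [ρ]; linarith)
    clear_value ρ
    obtain ⟨N, hN⟩ := eventually_atTop.mp hev
    set M := max N 1 with hM
    have hpow : ∀ m, M ≤ m → hpPartition m y ≤ ρ ^ m := by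
      intro m hm
      have hm1 : 1 ≤ m := le_trans (le_max_right N 1) hm
      have h := (hN m (le_trans (le_max_left N 1) hm)).le
      have hx : 0 ≤ hpPartition m y := hpPartition_nonneg m hy0.le
      have h2 : (hpPartition m y ^ (1/(m:ℝ)))^m ≤ ρ^m :=
        pow_le_pow_left₀ (Real.rpow_nonneg hx _) h m
      rwa [one_div, Real.rpow_inv_natCast_pow hx (by omega)] at h2
    set K := 1 + ∑ m ∈ Finset.range M, hpPartition m y / ρ ^ m with hKdef
    have hK1 : 1 ≤ K := by
      have : 0 ≤ ∑ m ∈ Finset.range M, hpPartition m y / ρ ^ m :=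
        Finset.sum_nonneg fun m _ =>
          div_nonneg (hpPartition_nonneg m hy0.le) (by positivity)
      dsimp [K]; linarith
    have hK0 : 0 < K := lt_of_lt_of_le one_pos hK1
    have hKbound : ∀ m, hpPartition m y ≤ K * ρ ^ m := by
      intro m
      by_cases h : m < M
      · have hterm : hpPartition m y / ρ^m ≤ K := by
          have h1 : hpPartition m y / ρ^m ≤ ∑ m' ∈ Finset.range M, hpPartition m' y / ρ ^ m' :=
            Finset.single_le_sum (f := fun m' => hpPartition m' y / ρ ^ m')
              (fun m' _ => div_nonneg (hpPartition_nonneg m' hy0.le) (by positivity))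
              (Finset.mem_range.mpr h)
          dsimp [K]; linarith
        calc hpPartition m y = (hpPartition m y / ρ^m) * ρ^m := by
              field_simp
          _ ≤ K * ρ^m := mul_le_mul_of_nonneg_right hterm (by positivity)
      · calc hpPartition m y ≤ ρ^m := hpow m (by omega)
          _ ≤ K * ρ^m := le_mul_of_one_le_left (by positivity) hK1
    clear_value K
    have hH : ∀ m, (hpTotal m : ℝ) ≤ (K/y) * ρ^(m+1) := by
      intro m
      have h1 := le_hpPartition (y := y) m hy0.le
      have h2 := hKbound (m+1)
      have h3 : (hpTotal m : ℝ) * y ≤ K * ρ^(m+1) := le_trans h1 h2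
      rw [div_mul_eq_mul_div, le_div_iff₀ hy0]
      linarith
    set A := (K/y)^2 * ρ^2 with hA
    have hA0 : 0 < A := by positivity
    clear_value A
    have hc : ∀ n, (sawCount 2 n : ℝ) ≤ ((n:ℝ)+1) * A * ρ^n := by
      intro n
      have h1 : (sawCount 2 n : ℝ) ≤
          ∑ j ∈ Finset.range (n+1), (hpTotal j : ℝ) * (hpTotal (n - j) : ℝ) := by
        have := sawCount_le_sum_hpTotal n
        calc (sawCount 2 n : ℝ) ≤
            ((∑ j ∈ Finset.range (n+1), hpTotal j * hpTotal (n - j) : ℕ) : ℝ) := by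
              exact_mod_cast this
          _ = ∑ j ∈ Finset.range (n+1), (hpTotal j : ℝ) * (hpTotal (n - j) : ℝ) := by
              push_cast; rfl
      have h2 : ∀ j ∈ Finset.range (n+1),
          (hpTotal j : ℝ) * (hpTotal (n - j) : ℝ) ≤ A * ρ^n := by
        intro j hj
        have hjn : j ≤ n := by
          have := Finset.mem_range.mp hj; omega
        have ha := hH j
        have hb := hH (n - j)
        have hprod : (hpTotal j : ℝ) * (hpTotal (n - j) : ℝ) ≤
            ((K/y) * ρ^(j+1)) * ((K/y) * ρ^((n-j)+1)) :=
          mul_le_mul ha hb (Nat.cast_nonneg _) (by positivity)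
        have hrw : ((K/y) * ρ^(j+1)) * ((K/y) * ρ^((n-j)+1)) = A * ρ^n := by
          rw [hA]
          have : ρ^(j+1) * ρ^((n-j)+1) = ρ^(n+2) := by
            rw [← pow_add, show (j+1) + ((n-j)+1) = n + 2 by omega]
          calc ((K/y) * ρ^(j+1)) * ((K/y) * ρ^((n-j)+1))
              = (K/y)^2 * (ρ^(j+1) * ρ^((n-j)+1)) := by ring
            _ = (K/y)^2 * ρ^(n+2) := by rw [this]
            _ = (K/y)^2 * ρ^2 * ρ^n := by rw [pow_add]; ring
        rw [hrw] at hprod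
        exact hprod
      calc (sawCount 2 n : ℝ) ≤
          ∑ j ∈ Finset.range (n+1), (hpTotal j : ℝ) * (hpTotal (n - j) : ℝ) := h1
        _ ≤ ∑ j ∈ Finset.range (n+1), A * ρ^n := Finset.sum_le_sum h2
        _ = ((n:ℝ)+1) * A * ρ^n := by
            rw [Finset.sum_const, Finset.card_range]
            push_cast
            ring
    by_contra hcon
    push_neg at hcon
    have hμpos : 0 < μ := lt_trans hρ0 hcon
    set q := ρ / μ with hq
    have hq0 : 0 ≤ q := by positivity
    have hq1 : q < 1 := (div_lt_one hμpos).mpr hcon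
    have hone : ∀ n : ℕ, 1 ≤ n → (1:ℝ) ≤ ((n:ℝ)+1) * A * q^n := by
      intro n hn
      have hμn := mu_le_root hμ n hn
      have hμpow : μ^n ≤ (sawCount 2 n : ℝ) := by
        have h2 : μ^n ≤ ((sawCount 2 n : ℝ) ^ (1/(n:ℝ)))^n :=
          pow_le_pow_left₀ hμpos.le hμn n
        rwa [one_div, Real.rpow_inv_natCast_pow (Nat.cast_nonneg _) (by omega)] at h2
      have h3 := le_trans hμpow (hc n)
      have hμn0 : (0:ℝ) < μ^n := pow_pos hμpos n
      have hqρ : ((n:ℝ)+1) * A * q^n = (((n:ℝ)+1) * A * ρ^n) / μ^n := by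
        rw [hq, div_pow]; ring
      rw [hqρ, le_div_iff₀ hμn0, one_mul]
      exact h3
    have hlim : Tendsto (fun n : ℕ => ((n:ℝ)+1) * A * q^n) atTop (nhds 0) := by
      have h1 := tendsto_self_mul_const_pow_of_lt_one hq0 hq1
      have h2 := tendsto_pow_atTop_nhds_zero_of_lt_one hq0 hq1
      have h3 := (h1.add h2).const_mul A
      have h4 : (fun n : ℕ => ((n:ℝ)+1) * A * q^n) =
          fun n : ℕ => A * ((n:ℝ) * q^n + q^n) := by funext n; ring
      rw [h4]
      simpa using h3
    have hev2 : ∀ᶠ n : ℕ in atTop, ((n:ℝ)+1) * A * q^n < 1 :=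
      hlim.eventually_lt_const one_pos
    obtain ⟨n, hn1, hn2⟩ := (hev2.and (eventually_ge_atTop 1)).exists
    exact absurd (hone n hn2) (not_le.mpr hn1)
end

section
/- There exists a critical value y_c with 1 ≤ y_c ≤ μ² such that μ(y) = μ for all 0 < y ≤ y_c and μ(y) > μ for all y > y_c, where μ is the growth constant of self-avoiding walks on ℤ² and μ(y) is the half-plane growth constant with surface fugacity y. -/
open Filter

namespace SAWAux

/-- clamped encoding of an integer in [-1,1] into Fin 3 -/
def encZ (x : ℤ) : Fin 3 := ⟨min (x + 1).toNat 2, by omega⟩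

lemma encZ_inj {x y : ℤ} (hx : |x| ≤ 1) (hy : |y| ≤ 1) (h : encZ x = encZ y) : x = y := by
  have hx' := abs_le.mp hx
  have hy' := abs_le.mp hy
  have := congrArg Fin.val h
  simp only [encZ] at this
  omega

/-- encode a 2-d walk by its steps -/
def enc (n : ℕ) (w : Fin (n + 1) → Fin 2 → ℤ) (i : Fin n) : Fin 3 × Fin 3 :=
  (encZ (w i.succ 0 - w i.castSucc 0), encZ (w i.succ 1 - w i.castSucc 1))

lemma step_abs_le {n : ℕ} {w : Fin (n + 1) → Fin 2 → ℤ} (hw : IsSAW 2 n w) (i : Fin n)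
    (k : Fin 2) : |w i.succ k - w i.castSucc k| ≤ 1 := by
  have h := hw.2.2 i
  rw [Fin.sum_univ_two] at h
  have h0 := abs_nonneg (w i.succ 0 - w i.castSucc 0)
  have h1 := abs_nonneg (w i.succ 1 - w i.castSucc 1)
  fin_cases k <;> simp <;> omega

lemma saw_eq_of_steps {n : ℕ} {w w' : Fin (n + 1) → Fin 2 → ℤ} (hw : IsSAW 2 n w)
    (hw' : IsSAW 2 n w') (h : ∀ i : Fin n, ∀ k, w i.succ k - w i.castSucc k
      = w' i.succ k - w' i.castSucc k) : w = w' := by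
  funext i
  induction i using Fin.induction with
  | zero => rw [hw.2.1, hw'.2.1]
  | succ j ih =>
      funext k
      have := h j k
      have : w j.succ k = w j.castSucc k + (w' j.succ k - w' j.castSucc k) := by linarith
      rw [this]
      have : w j.castSucc k = w' j.castSucc k := by rw [ih]
      rw [this]; ring

lemma enc_inj {n : ℕ} : Function.Injective
    (fun w : {w : Fin (n + 1) → Fin 2 → ℤ // IsSAW 2 n w} => enc n w.1) := by
  rintro ⟨w, hw⟩ ⟨w', hw'⟩ h
  simp only [Subtype.mk.injEq]
  apply saw_eq_of_steps hw hw'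
  intro i k
  have hi := congrFun h i
  have h1 : encZ (w i.succ k - w i.castSucc k) = encZ (w' i.succ k - w' i.castSucc k) := by
    fin_cases k
    · exact congrArg Prod.fst hi
    · exact congrArg Prod.snd hi
  exact encZ_inj (step_abs_le hw i k) (step_abs_le hw' i k) h1

instance finSAW (n : ℕ) : Finite {w : Fin (n + 1) → Fin 2 → ℤ // IsSAW 2 n w} :=
  Finite.of_injective _ enc_inj

instance finHP (n : ℕ) : Finite {w : Fin (n + 1) → Fin 2 → ℤ // IsHalfPlaneSAW n w} :=
  Finite.of_injective (fun w => (⟨w.1, w.2.1⟩ : {w : Fin (n + 1) → Fin 2 → ℤ // IsSAW 2 n w}))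
    (fun a b h => by cases a; cases b; simpa using h)

instance finHPC (n i : ℕ) : Finite {w : Fin (n + 1) → Fin 2 → ℤ // IsHalfPlaneSAW n w ∧
    (Finset.univ.filter fun j => w j 1 = 0).card = i} :=
  Finite.of_injective (fun w => (⟨w.1, w.2.1.1⟩ : {w : Fin (n + 1) → Fin 2 → ℤ // IsSAW 2 n w}))
    (fun a b h => by cases a; cases b; simpa using h)

noncomputable def hpTotal (m : ℕ) : ℕ :=
  Nat.card {w : Fin (m + 1) → Fin 2 → ℤ // IsHalfPlaneSAW m w}

lemma sawCount_le (n : ℕ) : sawCount 2 n ≤ 9 ^ n := by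
  have h := Nat.card_le_card_of_injective _ (enc_inj (n := n))
  simpa [sawCount, Nat.card_eq_fintype_card, Fintype.card_fun] using h

lemma hpTotal_le_sawCount (n : ℕ) : hpTotal n ≤ sawCount 2 n :=
  Nat.card_le_card_of_injective
    (fun w => (⟨w.1, w.2.1⟩ : {w : Fin (n + 1) → Fin 2 → ℤ // IsSAW 2 n w}))
    (fun a b h => by cases a; cases b; simpa using h)

lemma hpTotal_le (n : ℕ) : hpTotal n ≤ 9 ^ n :=
  (hpTotal_le_sawCount n).trans (sawCount_le n)

lemma nat_card_sigma {ι : Type*} [Fintype ι] (F : ι → Type*) [∀ i, Finite (F i)] :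
    Nat.card (Σ i, F i) = ∑ i, Nat.card (F i) := by
  classical
  have : ∀ i, Fintype (F i) := fun i => Fintype.ofFinite (F i)
  simp [Nat.card_eq_fintype_card, Fintype.card_sigma]

/-- number of surface contacts -/
def cnt {n : ℕ} (w : Fin (n + 1) → Fin 2 → ℤ) : ℕ :=
  (Finset.univ.filter fun j => w j 1 = 0).card

instance finHPC' (n i : ℕ) : Finite {w : Fin (n + 1) → Fin 2 → ℤ // IsHalfPlaneSAW n w ∧
    cnt w = i} :=
  Finite.of_injective (fun w => (⟨w.1, w.2.1.1⟩ : {w : Fin (n + 1) → Fin 2 → ℤ // IsSAW 2 n w}))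
    (fun a b h => by cases a; cases b; simpa using h)

lemma hpCount_eq (n i : ℕ) :
    hpCount n i = Nat.card {w : Fin (n + 1) → Fin 2 → ℤ // IsHalfPlaneSAW n w ∧ cnt w = i} :=
  rfl

lemma sum_hpCount_le (n : ℕ) :
    ∑ i ∈ Finset.range (n + 2), hpCount n i ≤ sawCount 2 n := by
  classical
  have key : Nat.card (Σ i : Fin (n + 2), {w : Fin (n + 1) → Fin 2 → ℤ //
      IsHalfPlaneSAW n w ∧ cnt w = (i : ℕ)}) ≤ sawCount 2 n := by
    apply Nat.card_le_card_of_injective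
      (fun p => (⟨p.2.1, p.2.2.1.1⟩ : {w : Fin (n + 1) → Fin 2 → ℤ // IsSAW 2 n w}))
    rintro ⟨i, w, hw, hc⟩ ⟨i', w', hw', hc'⟩ h
    have hww : w = w' := by simpa using h
    subst hww
    have : i = i' := Fin.ext (by rw [← hc, ← hc'])
    subst this
    rfl
  rw [nat_card_sigma] at key
  calc ∑ i ∈ Finset.range (n + 2), hpCount n i
      = ∑ i : Fin (n + 2), hpCount n (i : ℕ) := (Fin.sum_univ_eq_sum_range _ _).symm
    _ ≤ sawCount 2 n := by
        refine le_trans (le_of_eq (Finset.sum_congr rfl fun i _ => ?_)) key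
        rfl

/-- the straight horizontal walk -/
def straight (n : ℕ) : Fin (n + 1) → Fin 2 → ℤ := fun i k => if k = 0 then (i : ℤ) else 0

lemma straight_isSAW (n : ℕ) : IsSAW 2 n (straight n) := by
  refine ⟨?_, ?_, ?_⟩
  · intro i j h
    have := congrFun h 0
    simp only [straight, if_pos rfl] at this
    exact Fin.ext (by exact_mod_cast this)
  · funext k
    simp [straight]
  · intro i
    rw [Fin.sum_univ_two]
    simp [straight, Fin.val_succ, Fin.coe_castSucc]

lemma straight_isHP (n : ℕ) : IsHalfPlaneSAW n (straight n) :=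
  ⟨straight_isSAW n, fun i => by simp [straight]⟩

lemma straight_cnt (n : ℕ) : cnt (straight n) = n + 1 := by
  classical
  have : (Finset.univ.filter fun j : Fin (n+1) => straight n j 1 = 0) = Finset.univ := by
    apply Finset.filter_true_of_mem
    intro j _
    simp [straight]
  rw [cnt, this, Finset.card_univ, Fintype.card_fin]

lemma one_le_hpCount (n : ℕ) : 1 ≤ hpCount n (n + 1) := by
  rw [hpCount_eq]
  exact Nat.one_le_iff_ne_zero.mpr (Nat.card_ne_zero.mpr
    ⟨⟨⟨straight n, straight_isHP n, straight_cnt n⟩⟩, inferInstance⟩)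

lemma one_le_sawCount (n : ℕ) : 1 ≤ sawCount 2 n :=
  Nat.one_le_iff_ne_zero.mpr (Nat.card_ne_zero.mpr ⟨⟨⟨straight n, straight_isSAW n⟩⟩, inferInstance⟩)

lemma one_le_hpTotal (n : ℕ) : 1 ≤ hpTotal n :=
  Nat.one_le_iff_ne_zero.mpr (Nat.card_ne_zero.mpr ⟨⟨⟨straight n, straight_isHP n⟩⟩, inferInstance⟩)

/-- lift a half-plane walk by one unit, prefixing the origin -/
def lift (m : ℕ) (w : Fin (m + 1) → Fin 2 → ℤ) : Fin (m + 2) → Fin 2 → ℤ :=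
  fun i k => if h : i.val = 0 then 0 else
    w ⟨i.val - 1, by omega⟩ k + (if k = 1 then 1 else 0)

lemma lift_apply_zero {m : ℕ} (w : Fin (m + 1) → Fin 2 → ℤ) {i : Fin (m + 2)}
    (hi : i.val = 0) (k : Fin 2) : lift m w i k = 0 := dif_pos hi

lemma lift_apply_ne {m : ℕ} (w : Fin (m + 1) → Fin 2 → ℤ) {i : Fin (m + 2)}
    (hi : i.val ≠ 0) (k : Fin 2) :
    lift m w i k = w ⟨i.val - 1, by omega⟩ k + (if k = 1 then 1 else 0) := dif_neg hi

lemma lift_isHP {m : ℕ} {w : Fin (m + 1) → Fin 2 → ℤ} (hw : IsHalfPlaneSAW m w) :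
    IsHalfPlaneSAW (m + 1) (lift m w) ∧ cnt (lift m w) = 1 := by
  classical
  have hpos : ∀ i : Fin (m + 2), i.val ≠ 0 → 1 ≤ lift m w i 1 := by
    intro i hi
    rw [lift_apply_ne w hi 1, if_pos rfl]
    have := hw.2 ⟨i.val - 1, by omega⟩
    linarith
  have hzero : lift m w 0 = 0 := by
    funext k; exact lift_apply_zero w rfl k
  have hinj : Function.Injective (lift m w) := by
    intro i j h
    by_cases hi : i.val = 0 <;> by_cases hj : j.val = 0
    · exact Fin.ext (by omega)
    · exfalso
      have h1 := hpos j hj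
      rw [← h, lift_apply_zero w hi 1] at h1
      norm_num at h1
    · exfalso
      have h1 := hpos i hi
      rw [h, lift_apply_zero w hj 1] at h1
      norm_num at h1
    · have : w ⟨i.val - 1, by omega⟩ = w ⟨j.val - 1, by omega⟩ := by
        funext k
        have := congrFun h k
        rw [lift_apply_ne w hi k, lift_apply_ne w hj k] at this
        linarith
      have := congrArg Fin.val (hw.1.1 this)
      simp only at this
      exact Fin.ext (by omega)
  have hsteps : ∀ i : Fin (m + 1), (∑ k, |lift m w i.succ k - lift m w i.castSucc k|) = 1 := by
    intro i
    have hsucc : (i.succ : Fin (m + 2)).val = i.val + 1 := Fin.val_succ i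
    have hcast : (i.castSucc : Fin (m + 2)).val = i.val := Fin.coe_castSucc i
    have hsne : (i.succ : Fin (m + 2)).val ≠ 0 := by omega
    rcases Nat.eq_zero_or_pos i.val with hi | hi
    · have hc0 : (i.castSucc : Fin (m + 2)).val = 0 := by omega
      have e3 : ∀ k, w 0 k = 0 := fun k => by rw [hw.1.2.1]; rfl
      have e2 : ∀ k : Fin 2, lift m w i.succ k = (if k = 1 then 1 else 0) := by
        intro k
        rw [lift_apply_ne w hsne k]
        have : (⟨(i.succ : Fin (m + 2)).val - 1, by omega⟩ : Fin (m + 1)) = 0 :=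
          Fin.ext (by simp only [Fin.val_zero, Fin.val_succ]; omega)
        rw [this, e3]
        ring
      rw [Fin.sum_univ_two, e2, e2, lift_apply_zero w hc0, lift_apply_zero w hc0]
      norm_num
    · have hcne : (i.castSucc : Fin (m + 2)).val ≠ 0 := by omega
      set s : Fin m := ⟨i.val - 1, by omega⟩ with hs
      have hstep := hw.1.2.2 s
      have es : (⟨(i.succ : Fin (m + 2)).val - 1, by omega⟩ : Fin (m + 1)) = s.succ :=
        Fin.ext (by simp [hsucc, Fin.val_succ, hs]; omega)
      have ec : (⟨(i.castSucc : Fin (m + 2)).val - 1, by omega⟩ : Fin (m + 1)) = s.castSucc :=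
        Fin.ext (by simp [hcast, Fin.coe_castSucc, hs])
      rw [Fin.sum_univ_two] at hstep ⊢
      rw [lift_apply_ne w hsne, lift_apply_ne w hsne, lift_apply_ne w hcne,
        lift_apply_ne w hcne, es, ec]
      simpa using hstep
  refine ⟨⟨⟨hinj, hzero, hsteps⟩, ?_⟩, ?_⟩
  · intro i
    rcases Nat.eq_zero_or_pos i.val with hi | hi
    · rw [lift_apply_zero w hi 1]
    · have := hpos i (by omega)
      linarith
  · have : (Finset.univ.filter fun j : Fin (m+2) => lift m w j 1 = 0) = {0} := by
      apply Finset.eq_singleton_iff_unique_mem.mpr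
      constructor
      · simp [lift_apply_zero w (rfl : ((0:Fin (m+2))).val = 0) 1]
      · intro j hj
        rcases Nat.eq_zero_or_pos j.val with h0 | h0
        · exact Fin.ext h0
        · exfalso
          have := hpos j (by omega)
          have hj' := (Finset.mem_filter.mp hj).2
          rw [hj'] at this
          norm_num at this
    rw [cnt, this, Finset.card_singleton]

lemma hpTotal_le_hpCount (m : ℕ) : hpTotal m ≤ hpCount (m + 1) 1 := by
  rw [hpCount_eq]
  apply Nat.card_le_card_of_injective
    (fun w => (⟨lift m w.1, (lift_isHP w.2).1, (lift_isHP w.2).2⟩ :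
      {v : Fin (m + 2) → Fin 2 → ℤ // IsHalfPlaneSAW (m+1) v ∧ cnt v = 1}))
  rintro ⟨w, hw⟩ ⟨w', hw'⟩ h
  have hl : lift m w = lift m w' := by simpa using h
  apply Subtype.ext
  funext j k
  have hjs : ((j.succ : Fin (m+2))).val ≠ 0 := by simp [Fin.val_succ]
  have := congrFun (congrFun hl j.succ) k
  rw [lift_apply_ne w hjs k, lift_apply_ne w' hjs k] at this
  have hidx : (⟨(j.succ : Fin (m+2)).val - 1, by omega⟩ : Fin (m+1)) = j :=
    Fin.ext (by simp [Fin.val_succ])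
  rw [hidx] at this
  linarith

lemma minSet_nonempty {n : ℕ} (w : Fin (n+1) → Fin 2 → ℤ) :
    (Finset.univ.filter fun i : Fin (n+1) => ∀ k, w i 1 ≤ w k 1).Nonempty := by
  classical
  obtain ⟨i₀, -, h⟩ := Finset.exists_min_image Finset.univ (fun i => w i 1)
    ⟨0, Finset.mem_univ 0⟩
  exact ⟨i₀, Finset.mem_filter.mpr ⟨Finset.mem_univ _, fun k => h k (Finset.mem_univ k)⟩⟩

noncomputable def minIdx {n : ℕ} (w : Fin (n+1) → Fin 2 → ℤ) : Fin (n+1) :=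
  (Finset.univ.filter fun i : Fin (n+1) => ∀ k, w i 1 ≤ w k 1).min' (minSet_nonempty w)

lemma minIdx_le {n : ℕ} (w : Fin (n+1) → Fin 2 → ℤ) : ∀ k, w (minIdx w) 1 ≤ w k 1 :=
  (Finset.mem_filter.mp ((Finset.univ.filter fun i : Fin (n+1) =>
    ∀ k, w i 1 ≤ w k 1).min'_mem (minSet_nonempty w))).2

def headW {n : ℕ} (w : Fin (n+1) → Fin 2 → ℤ) (j : Fin (n+1)) :
    Fin (j.val + 1) → Fin 2 → ℤ :=
  fun i k => w ⟨j.val - i.val, by have := j.isLt; omega⟩ k - w j k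

def tailW {n : ℕ} (w : Fin (n+1) → Fin 2 → ℤ) (j : Fin (n+1)) :
    Fin (n - j.val + 1) → Fin 2 → ℤ :=
  fun i k => w ⟨j.val + i.val, by have := j.isLt; have := i.isLt; omega⟩ k - w j k

lemma headW_isHP {n : ℕ} {w : Fin (n+1) → Fin 2 → ℤ} (hw : IsSAW 2 n w) (j : Fin (n+1))
    (hj : ∀ k, w j 1 ≤ w k 1) : IsHalfPlaneSAW j.val (headW w j) := by
  refine ⟨⟨?_, ?_, ?_⟩, ?_⟩
  · intro a b h
    have : w ⟨j.val - a.val, by have := j.isLt; omega⟩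
        = w ⟨j.val - b.val, by have := j.isLt; omega⟩ := by
      funext k
      have hk := congrFun h k
      simp only [headW] at hk
      linarith
    have := congrArg Fin.val (hw.1 this)
    simp only at this
    exact Fin.ext (by have := a.isLt; have := b.isLt; omega)
  · funext k
    simp only [headW, Fin.val_zero, Nat.sub_zero]
    have : (⟨j.val, j.isLt⟩ : Fin (n+1)) = j := Fin.ext rfl
    rw [this]; simp
  · intro i
    have hi := i.isLt
    have hjn := j.isLt
    set s : Fin n := ⟨j.val - i.val - 1, by omega⟩ with hs
    have hstep := hw.2.2 s
    have es : (⟨j.val - (i.succ : Fin (j.val+1)).val, by have := j.isLt; omega⟩ : Fin (n+1))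
        = s.castSucc := Fin.ext (by simp [Fin.val_succ, Fin.coe_castSucc, hs]; omega)
    have ec : (⟨j.val - (i.castSucc : Fin (j.val+1)).val, by have := j.isLt; omega⟩ : Fin (n+1))
        = s.succ := Fin.ext (by simp [Fin.val_succ, Fin.coe_castSucc, hs]; omega)
    have e1 : ∀ k, headW w j i.succ k - headW w j i.castSucc k
        = -(w s.succ k - w s.castSucc k) := by
      intro k
      simp only [headW]
      rw [es, ec]
      ring
    rw [Fin.sum_univ_two] at hstep ⊢
    rw [e1, e1, abs_neg, abs_neg]
    exact hstep
  · intro i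
    have := hj ⟨j.val - i.val, by have := j.isLt; omega⟩
    simp only [headW]
    linarith

lemma tailW_isHP {n : ℕ} {w : Fin (n+1) → Fin 2 → ℤ} (hw : IsSAW 2 n w) (j : Fin (n+1))
    (hj : ∀ k, w j 1 ≤ w k 1) : IsHalfPlaneSAW (n - j.val) (tailW w j) := by
  have hjn := j.isLt
  refine ⟨⟨?_, ?_, ?_⟩, ?_⟩
  · intro a b h
    have : w ⟨j.val + a.val, by have := a.isLt; omega⟩
        = w ⟨j.val + b.val, by have := b.isLt; omega⟩ := by
      funext k
      have hk := congrFun h k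
      simp only [tailW] at hk
      linarith
    have := congrArg Fin.val (hw.1 this)
    simp only at this
    exact Fin.ext (by omega)
  · funext k
    simp only [tailW, Fin.val_zero, Nat.add_zero]
    have : (⟨j.val, j.isLt⟩ : Fin (n+1)) = j := Fin.ext rfl
    rw [this]; simp
  · intro i
    have hi := i.isLt
    set s : Fin n := ⟨j.val + i.val, by omega⟩ with hs
    have hstep := hw.2.2 s
    have es : (⟨j.val + (i.succ : Fin (n - j.val + 1)).val, by have := i.isLt; omega⟩
        : Fin (n+1)) = s.succ := Fin.ext (by simp [Fin.val_succ, hs]; omega)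
    have ec : (⟨j.val + (i.castSucc : Fin (n - j.val + 1)).val, by have := i.isLt; omega⟩
        : Fin (n+1)) = s.castSucc := Fin.ext (by simp [Fin.coe_castSucc, hs])
    have e1 : ∀ k, tailW w j i.succ k - tailW w j i.castSucc k
        = w s.succ k - w s.castSucc k := by
      intro k
      simp only [tailW]
      rw [es, ec]
      ring
    rw [Fin.sum_univ_two] at hstep ⊢
    rw [e1, e1]
    exact hstep
  · intro i
    have := hj ⟨j.val + i.val, by have := i.isLt; omega⟩
    simp only [tailW]
    linarith

def SplitT (n : ℕ) : Type :=
  Σ j : Fin (n+1), ({u : Fin (j.val + 1) → Fin 2 → ℤ // IsHalfPlaneSAW j.val u}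
    × {v : Fin (n - j.val + 1) → Fin 2 → ℤ // IsHalfPlaneSAW (n - j.val) v})

noncomputable instance (n : ℕ) : Finite (SplitT n) := by
  unfold SplitT; infer_instance

noncomputable def phi {n : ℕ} (p : {w : Fin (n+1) → Fin 2 → ℤ // IsSAW 2 n w}) : SplitT n :=
  ⟨minIdx p.1, ⟨headW p.1 (minIdx p.1), headW_isHP p.2 _ (minIdx_le p.1)⟩,
    ⟨tailW p.1 (minIdx p.1), tailW_isHP p.2 _ (minIdx_le p.1)⟩⟩

def recon {n : ℕ} (q : SplitT n) : Fin (n+1) → Fin 2 → ℤ :=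
  fun i k =>
    if h : i.val ≤ q.1.val then
      q.2.1.1 ⟨q.1.val - i.val, by omega⟩ k - q.2.1.1 ⟨q.1.val, by omega⟩ k
    else
      q.2.2.1 ⟨i.val - q.1.val, by have := i.isLt; have := q.1.isLt; omega⟩ k
        - q.2.1.1 ⟨q.1.val, by omega⟩ k

lemma recon_phi {n : ℕ} (p : {w : Fin (n+1) → Fin 2 → ℤ // IsSAW 2 n w}) :
    recon (phi p) = p.1 := by
  obtain ⟨w, hw⟩ := p
  funext i k
  have hw0 : ∀ k, w 0 k = 0 := fun k => by rw [hw.2.1]; rfl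
  dsimp only [recon, phi]
  set j := minIdx w with hjdef
  have hjn := j.isLt
  have hin := i.isLt
  by_cases h : i.val ≤ j.val
  · rw [dif_pos h]
    simp only [headW]
    have e1 : (⟨j.val - (j.val - i.val), by omega⟩ : Fin (n+1)) = i :=
      Fin.ext (by simp only [Fin.val_mk]; omega)
    have e0 : (⟨j.val - j.val, by omega⟩ : Fin (n+1)) = 0 :=
      Fin.ext (by simp only [Fin.val_mk, Fin.val_zero]; omega)
    rw [e1, e0, hw0]
    ring
  · rw [dif_neg h]
    simp only [headW, tailW]
    have e1 : (⟨j.val + (i.val - j.val), by omega⟩ : Fin (n+1)) = i :=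
      Fin.ext (by simp only [Fin.val_mk]; omega)
    have e0 : (⟨j.val - j.val, by omega⟩ : Fin (n+1)) = 0 :=
      Fin.ext (by simp only [Fin.val_mk, Fin.val_zero]; omega)
    rw [e1, e0, hw0]
    ring

lemma phi_inj {n : ℕ} : Function.Injective (phi (n := n)) := by
  intro a b h
  have := congrArg recon h
  rw [recon_phi, recon_phi] at this
  exact Subtype.ext this

lemma split (n : ℕ) :
    sawCount 2 n ≤ ∑ j ∈ Finset.range (n+1), hpTotal j * hpTotal (n - j) := by
  classical
  have key := Nat.card_le_card_of_injective _ (phi_inj (n := n))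
  have hcard : Nat.card (SplitT n) = ∑ j ∈ Finset.range (n+1), hpTotal j * hpTotal (n - j) := by
    rw [show Nat.card (SplitT n) = ∑ j : Fin (n+1), hpTotal j.val * hpTotal (n - j.val) from ?_]
    · exact Fin.sum_univ_eq_sum_range (fun j => hpTotal j * hpTotal (n - j)) (n+1)
    · rw [SplitT, nat_card_sigma]
      exact Finset.sum_congr rfl fun j _ => by rw [Nat.card_prod]; rfl
  rw [← hcard]
  exact key

lemma hpPartition_nonneg {n : ℕ} {y : ℝ} (hy : 0 ≤ y) : 0 ≤ hpPartition n y :=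
  Finset.sum_nonneg fun i _ => mul_nonneg (Nat.cast_nonneg _) (pow_nonneg hy i)

lemma hpPartition_mono {n : ℕ} {y z : ℝ} (hy : 0 ≤ y) (hyz : y ≤ z) :
    hpPartition n y ≤ hpPartition n z :=
  Finset.sum_le_sum fun i _ => by
    have := pow_le_pow_left₀ hy hyz i
    exact mul_le_mul_of_nonneg_left this (Nat.cast_nonneg _)

lemma hpPartition_ratio {n : ℕ} {y z : ℝ} (hy : 0 < y) (hyz : y ≤ z) :
    hpPartition n z ≤ (z / y) ^ (n + 1) * hpPartition n y := by
  rw [hpPartition, hpPartition, Finset.mul_sum]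
  apply Finset.sum_le_sum
  intro i hi
  have hi' : i ≤ n + 1 := by
    have := Finset.mem_range.mp hi; omega
  have hr : 1 ≤ z / y := (one_le_div hy).mpr hyz
  have h1 : z ^ i = (z / y) ^ i * y ^ i := by
    rw [div_pow, div_mul_eq_mul_div, mul_div_assoc, div_self (by positivity), mul_one]
  rw [h1, show ((hpCount n i : ℝ) * ((z/y)^i * y^i)) = (z/y)^i * ((hpCount n i : ℝ) * y^i)
    from by ring]
  apply mul_le_mul_of_nonneg_right (pow_le_pow_right₀ hr hi')
  exact mul_nonneg (Nat.cast_nonneg _) (pow_nonneg hy.le i)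

lemma hpPartition_one_le (n : ℕ) : hpPartition n 1 ≤ (sawCount 2 n : ℝ) := by
  rw [hpPartition]
  simp only [one_pow, mul_one]
  rw [← Nat.cast_sum]
  exact_mod_cast sum_hpCount_le n

lemma le_hpPartition_lift {m : ℕ} {y : ℝ} (hy : 0 ≤ y) :
    y * (hpTotal m : ℝ) ≤ hpPartition (m + 1) y := by
  have h1 : (hpTotal m : ℝ) ≤ (hpCount (m+1) 1 : ℝ) := by exact_mod_cast hpTotal_le_hpCount m
  have h2 : (hpCount (m+1) 1 : ℝ) * y ^ 1 ≤ hpPartition (m+1) y := by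
    apply Finset.single_le_sum (f := fun i => (hpCount (m+1) i : ℝ) * y ^ i)
    · intro i _; exact mul_nonneg (Nat.cast_nonneg _) (pow_nonneg hy i)
    · exact Finset.mem_range.mpr (by omega)
  calc y * (hpTotal m : ℝ) ≤ y * (hpCount (m+1) 1 : ℝ) := by
        exact mul_le_mul_of_nonneg_left h1 hy
    _ = (hpCount (m+1) 1 : ℝ) * y ^ 1 := by ring
    _ ≤ _ := h2

lemma pow_le_hpPartition {n : ℕ} {y : ℝ} (hy : 0 ≤ y) : y ^ (n+1) ≤ hpPartition n y := by
  have h2 : (hpCount n (n+1) : ℝ) * y ^ (n+1) ≤ hpPartition n y := by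
    apply Finset.single_le_sum (f := fun i => (hpCount n i : ℝ) * y ^ i)
    · intro i _; exact mul_nonneg (Nat.cast_nonneg _) (pow_nonneg hy i)
    · exact Finset.mem_range.mpr (by omega)
  refine le_trans ?_ h2
  have : (1 : ℝ) ≤ (hpCount n (n+1) : ℝ) := by exact_mod_cast one_le_hpCount n
  nlinarith [pow_nonneg hy (n+1)]

lemma hpPartition_pos {n : ℕ} {y : ℝ} (hy : 0 < y) : 0 < hpPartition n y :=
  lt_of_lt_of_le (by positivity) (pow_le_hpPartition hy.le)

lemma hpPartition_le_bound {n : ℕ} {y : ℝ} (hy : 0 < y) :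
    hpPartition n y ≤ (max 1 y) ^ (n + 1) * 9 ^ n := by
  have h1 : hpPartition n y ≤ hpPartition n (max 1 y) := hpPartition_mono hy.le (le_max_right _ _)
  have h2 : hpPartition n (max 1 y) ≤ (max 1 y / 1) ^ (n+1) * hpPartition n 1 :=
    hpPartition_ratio one_pos (le_max_left _ _)
  have h3 : hpPartition n 1 ≤ (9 : ℝ) ^ n :=
    (hpPartition_one_le n).trans (by exact_mod_cast sawCount_le n)
  calc hpPartition n y ≤ (max 1 y / 1) ^ (n+1) * hpPartition n 1 := h1.trans h2
    _ = (max 1 y) ^ (n+1) * hpPartition n 1 := by rw [div_one]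
    _ ≤ (max 1 y) ^ (n+1) * 9 ^ n := by
        apply mul_le_mul_of_nonneg_left h3 (by positivity)

noncomputable def bseq (y : ℝ) (n : ℕ) : ℝ := hpPartition n y ^ (1 / (n:ℝ))
noncomputable def aseq (n : ℕ) : ℝ := (sawCount 2 n : ℝ) ^ (1 / (n:ℝ))

lemma bseq_nonneg {y : ℝ} (hy : 0 ≤ y) (n : ℕ) : 0 ≤ bseq y n :=
  Real.rpow_nonneg (hpPartition_nonneg hy) _

lemma bseq_le_bound {y : ℝ} (hy : 0 < y) (n : ℕ) : bseq y n ≤ 9 * (max 1 y) ^ 2 := by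
  have hM : (1:ℝ) ≤ max 1 y := le_max_left _ _
  rcases Nat.eq_zero_or_pos n with hn | hn
  · subst hn
    rw [bseq]
    norm_num
    nlinarith
  · have hP := hpPartition_le_bound (n := n) hy
    have h0 : (0:ℝ) ≤ hpPartition n y := hpPartition_nonneg hy.le
    have h1 : bseq y n ≤ ((max 1 y) ^ (n+1) * 9 ^ n) ^ (1/(n:ℝ)) :=
      Real.rpow_le_rpow h0 hP (by positivity)
    have h2 : ((max 1 y) ^ (n+1) * 9 ^ n : ℝ) ^ (1/(n:ℝ))
        = ((max 1 y) ^ (n+1) : ℝ) ^ (1/(n:ℝ)) * ((9:ℝ) ^ n) ^ (1/(n:ℝ)) :=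
      Real.mul_rpow (by positivity) (by positivity)
    have h3 : ((9:ℝ) ^ n) ^ (1/(n:ℝ)) = 9 := by
      rw [one_div, Real.pow_rpow_inv_natCast (by norm_num) (by omega)]
    have h4 : ((max 1 y) ^ (n+1) : ℝ) ^ (1/(n:ℝ)) ≤ (max 1 y) ^ (2:ℝ) := by
      rw [← Real.rpow_natCast (max 1 y) (n+1), ← Real.rpow_mul (by linarith)]
      apply Real.rpow_le_rpow_of_exponent_le hM
      rw [Nat.cast_add, Nat.cast_one]
      rw [div_eq_mul_inv, one_mul] -- not needed maybe
      have hn' : (1:ℝ) ≤ (n:ℝ) := by exact_mod_cast hn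
      rw [show ((n:ℝ)+1) * (n:ℝ)⁻¹ = ((n:ℝ)+1)/(n:ℝ) from by ring, div_le_iff₀ (by linarith)]
      linarith
    calc bseq y n ≤ _ := h1
      _ = _ := h2
      _ ≤ (max 1 y) ^ (2:ℝ) * 9 := by
          rw [h3]
          apply mul_le_mul_of_nonneg_right h4 (by norm_num)
      _ = 9 * (max 1 y) ^ 2 := by
          rw [show ((2:ℝ)) = ((2:ℕ):ℝ) from by norm_num, Real.rpow_natCast]
          ring

lemma aseq_nonneg (n : ℕ) : 0 ≤ aseq n := Real.rpow_nonneg (Nat.cast_nonneg _) _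

lemma aseq_le_bound (n : ℕ) : aseq n ≤ 9 := by
  rcases Nat.eq_zero_or_pos n with hn | hn
  · subst hn; rw [aseq]; norm_num
  · have h1 : aseq n ≤ ((9:ℝ) ^ n) ^ (1/(n:ℝ)) := by
      apply Real.rpow_le_rpow (Nat.cast_nonneg _) _ (by positivity)
      exact_mod_cast sawCount_le n
    rwa [one_div, Real.pow_rpow_inv_natCast (by norm_num) (by omega)] at h1

lemma one_le_aseq {n : ℕ} (hn : 1 ≤ n) : 1 ≤ aseq n :=
  Real.one_le_rpow (by exact_mod_cast one_le_sawCount n) (by positivity)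

open Filter in
lemma bdd_b {y : ℝ} (hy : 0 < y) :
    IsBoundedUnder (· ≤ ·) atTop (bseq y) :=
  isBoundedUnder_of ⟨9 * (max 1 y)^2, fun n => bseq_le_bound hy n⟩

open Filter in
lemma cobdd_b {y : ℝ} (hy : 0 < y) :
    IsCoboundedUnder (· ≤ ·) atTop (bseq y) :=
  (isBoundedUnder_of ⟨0, fun n => (bseq_nonneg hy.le n : 0 ≤ bseq y n)⟩ :
    IsBoundedUnder (· ≥ ·) atTop (bseq y)).isCoboundedUnder_flip

noncomputable def Lf (y : ℝ) : ℝ := Filter.limsup (bseq y) Filter.atTop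

lemma Lf_nonneg {y : ℝ} (hy : 0 < y) : 0 ≤ Lf y :=
  Filter.le_limsup_of_frequently_le
    (Filter.Eventually.frequently (Filter.Eventually.of_forall fun n => bseq_nonneg hy.le n))
    (bdd_b hy)

lemma Lf_mono {y z : ℝ} (hy : 0 < y) (hyz : y ≤ z) : Lf y ≤ Lf z := by
  apply Filter.limsup_le_limsup _ (cobdd_b hy) (bdd_b (lt_of_lt_of_le hy hyz))
  apply Filter.Eventually.of_forall
  intro n
  exact Real.rpow_le_rpow (hpPartition_nonneg hy.le)
    (hpPartition_mono hy.le hyz) (by positivity)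

lemma Lf_one_le {μ : ℝ}
    (hμ : Filter.Tendsto aseq Filter.atTop (nhds μ)) : Lf 1 ≤ μ := by
  have hμ' : Filter.limsup aseq Filter.atTop = μ := hμ.limsup_eq
  rw [← hμ']
  apply Filter.limsup_le_limsup _ (cobdd_b one_pos) (isBoundedUnder_of ⟨9, aseq_le_bound⟩)
  apply Filter.Eventually.of_forall
  intro n
  exact Real.rpow_le_rpow (hpPartition_nonneg one_pos.le) (hpPartition_one_le n) (by positivity)

lemma one_le_mu {μ : ℝ}
    (hμ : Filter.Tendsto aseq Filter.atTop (nhds μ)) : 1 ≤ μ := by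
  apply ge_of_tendsto hμ
  filter_upwards [Filter.eventually_ge_atTop 1] with n hn
  exact one_le_aseq hn

lemma le_Lf_self {y : ℝ} (hy : 1 ≤ y) : y ≤ Lf y := by
  have hy0 : (0:ℝ) < y := lt_of_lt_of_le one_pos hy
  apply Filter.le_limsup_of_frequently_le _ (bdd_b hy0)
  apply Filter.Eventually.frequently
  filter_upwards [Filter.eventually_ge_atTop 1] with n hn
  have hn' : (1:ℝ) ≤ (n:ℝ) := by exact_mod_cast hn
  have h1 : (y ^ (n+1) : ℝ) ^ (1/(n:ℝ)) ≤ bseq y n :=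
    Real.rpow_le_rpow (by positivity) (pow_le_hpPartition hy0.le) (by positivity)
  have h2 : (y ^ (n+1) : ℝ) ^ (1/(n:ℝ)) = y ^ (((n:ℝ)+1) * (1/(n:ℝ))) := by
    rw [← Real.rpow_natCast y (n+1), ← Real.rpow_mul hy0.le]
    norm_num
  have h3 : y ^ (1:ℝ) ≤ y ^ (((n:ℝ)+1) * (1/(n:ℝ))) := by
    apply Real.rpow_le_rpow_of_exponent_le hy
    rw [show ((n:ℝ)+1) * (1/(n:ℝ)) = ((n:ℝ)+1)/(n:ℝ) from by ring,
      le_div_iff₀ (by linarith)]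
    linarith
  calc y = y ^ (1:ℝ) := (Real.rpow_one y).symm
    _ ≤ y ^ (((n:ℝ)+1) * (1/(n:ℝ))) := h3
    _ = (y ^ (n+1) : ℝ) ^ (1/(n:ℝ)) := h2.symm
    _ ≤ bseq y n := h1

lemma Lf_ratio {y z μr : ℝ} (hy : 0 < y) (hyz : y ≤ z) : Lf z ≤ (z/y)^2 * Lf y := by
  have hz0 : 0 < z := lt_of_lt_of_le hy hyz
  have hR : (1:ℝ) ≤ z / y := (one_le_div hy).mpr hyz
  have hptwise : ∀ n : ℕ, 1 ≤ n → bseq z n ≤ (z/y)^2 * bseq y n := by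
    intro n hn
    have hn' : (1:ℝ) ≤ (n:ℝ) := by exact_mod_cast hn
    have h1 : bseq z n ≤ ((z/y) ^ (n+1) * hpPartition n y) ^ (1/(n:ℝ)) :=
      Real.rpow_le_rpow (hpPartition_nonneg hz0.le) (hpPartition_ratio hy hyz) (by positivity)
    have h2 : ((z/y) ^ (n+1) * hpPartition n y) ^ (1/(n:ℝ))
        = ((z/y) ^ (n+1) : ℝ) ^ (1/(n:ℝ)) * bseq y n :=
      Real.mul_rpow (by positivity) (hpPartition_nonneg hy.le)
    have h3 : ((z/y) ^ (n+1) : ℝ) ^ (1/(n:ℝ)) ≤ (z/y) ^ 2 := by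
      rw [← Real.rpow_natCast (z/y) (n+1), ← Real.rpow_mul (by positivity),
        show ((z/y):ℝ)^2 = (z/y) ^ ((2:ℕ):ℝ) from (Real.rpow_natCast _ 2).symm]
      apply Real.rpow_le_rpow_of_exponent_le hR
      push_cast
      rw [show ((n:ℝ)+1) * (1/(n:ℝ)) = ((n:ℝ)+1)/(n:ℝ) from by ring,
        div_le_iff₀ (by linarith)]
      linarith
    calc bseq z n ≤ _ := h1
      _ = _ := h2
      _ ≤ (z/y)^2 * bseq y n :=
          mul_le_mul_of_nonneg_right h3 (bseq_nonneg hy.le n)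
  -- now pass to limsup via an ε-argument
  have key : ∀ ε : ℝ, 0 < ε → Lf z ≤ (z/y)^2 * Lf y + (z/y)^2 * ε := by
    intro ε hε
    have hlt : Lf y < Lf y + ε := by linarith
    have hev := Filter.eventually_lt_of_limsup_lt hlt (bdd_b hy)
    apply Filter.limsup_le_of_le (cobdd_b hz0)
    filter_upwards [hev, Filter.eventually_ge_atTop 1] with n h1 h2
    calc bseq z n ≤ (z/y)^2 * bseq y n := hptwise n h2
      _ ≤ (z/y)^2 * (Lf y + ε) := by
          apply mul_le_mul_of_nonneg_left h1.le (by positivity)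
      _ = (z/y)^2 * Lf y + (z/y)^2 * ε := by ring
  apply le_of_forall_pos_le_add
  intro ε hε
  have hc : (0:ℝ) < (z/y)^2 := by positivity
  have := key (ε / ((z/y)^2)) (by positivity)
  calc Lf z ≤ (z/y)^2 * Lf y + (z/y)^2 * (ε / ((z/y)^2)) := this
    _ = (z/y)^2 * Lf y + ε := by rw [mul_div_cancel₀ _ (ne_of_gt hc)]

lemma ev_linear_le_geom (C : ℝ) {r : ℝ} (hr : 1 < r) :
    ∀ᶠ n : ℕ in Filter.atTop, C * ((n:ℝ) + 1) ≤ r ^ n := by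
  have hr0 : (0:ℝ) ≤ r := by linarith
  have hsr : 1 < Real.sqrt r := by
    rw [show (1:ℝ) = Real.sqrt 1 from (Real.sqrt_one).symm]
    exact Real.sqrt_lt_sqrt (by norm_num) hr
  set s := Real.sqrt r - 1 with hs
  have hs0 : 0 < s := by linarith
  have hsq : (1 + s)^2 = r := by
    rw [hs]
    have := Real.sq_sqrt hr0
    nlinarith [this]
  obtain ⟨N, hN⟩ : ∃ N : ℕ, 1 ≤ N ∧ 2 * (|C| + 1) ≤ (N:ℝ) * s^2 := by
    refine ⟨max 1 ⌈(2 * (|C| + 1)) / s^2⌉₊, le_max_left _ _, ?_⟩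
    have h1 : ((2 * (|C| + 1)) / s^2) ≤ (⌈(2 * (|C| + 1)) / s^2⌉₊ : ℝ) := Nat.le_ceil _
    have h2 : ((⌈(2 * (|C| + 1)) / s^2⌉₊:ℕ):ℝ) ≤ ((max 1 ⌈(2 * (|C| + 1)) / s^2⌉₊ : ℕ):ℝ) := by
      exact_mod_cast le_max_right 1 ⌈(2 * (|C| + 1)) / s^(2:ℕ)⌉₊
    have h3 := (div_le_iff₀ (by positivity : (0:ℝ) < s^2)).mp (h1.trans h2)
    linarith
  filter_upwards [Filter.eventually_ge_atTop N] with n hn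
  have hn1 : 1 ≤ n := le_trans hN.1 hn
  have hnR : (N:ℝ) ≤ (n:ℝ) := by exact_mod_cast hn
  have hn1R : (1:ℝ) ≤ (n:ℝ) := by exact_mod_cast hn1
  have hber : 1 + (n:ℝ) * s ≤ (1 + s)^n := one_add_mul_le_pow (by linarith) n
  have hns : 0 ≤ (n:ℝ) * s := by positivity
  have h4 : ((n:ℝ) * s)^2 ≤ ((1 + s)^n)^2 := by nlinarith
  have h5 : ((1 + s)^n)^2 = r^n := by
    rw [← pow_mul, mul_comm n 2, pow_mul, hsq]
  rw [← h5]
  have hCabs : C ≤ |C| := le_abs_self C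
  have hkey : 2 * (|C| + 1) ≤ (n:ℝ) * s^2 := by nlinarith
  have e1 : C * ((n:ℝ)+1) ≤ (|C|+1) * ((n:ℝ)+1) := by nlinarith
  have e2 : (|C|+1) * ((n:ℝ)+1) ≤ 2*(|C|+1) * (n:ℝ) := by nlinarith [abs_nonneg C]
  have e3 : 2*(|C|+1) * (n:ℝ) ≤ ((n:ℝ) * s^2) * (n:ℝ) := by nlinarith
  have e4 : ((n:ℝ) * s^2) * (n:ℝ) = ((n:ℝ)*s)^2 := by ring
  linarith

open Filter in
lemma mu_le_Lf {μ y : ℝ} (hμ : Tendsto aseq atTop (nhds μ)) (hy : 0 < y) : μ ≤ Lf y := by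
  apply le_of_forall_pos_le_add
  intro ε hε
  have hLy := Lf_nonneg hy
  set q : ℝ := Lf y + ε/2 with hqdef
  have hq0 : 0 < q := by rw [hqdef]; linarith
  have hev : ∀ᶠ n in atTop, bseq y n < q :=
    Filter.eventually_lt_of_limsup_lt (by rw [hqdef]; show Lf y < Lf y + ε/2; linarith) (bdd_b hy)
  obtain ⟨N₀, hN₀⟩ := Filter.eventually_atTop.mp hev
  set N : ℕ := max N₀ 1 with hNdef
  have hP : ∀ n : ℕ, N ≤ n → hpPartition n y ≤ q ^ n := by
    intro n hn
    have h1 : bseq y n < q := hN₀ n (le_trans (le_max_left _ _) hn)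
    have hn1 : 1 ≤ n := le_trans (le_max_right _ _) hn
    have h2 : (bseq y n) ^ n ≤ q ^ n := pow_le_pow_left₀ (bseq_nonneg hy.le n) h1.le n
    rwa [bseq, one_div, Real.rpow_inv_natCast_pow (hpPartition_nonneg hy.le) (by omega)] at h2
  set M : ℝ := max (q / y) ((max 1 (9/q)) ^ N) with hMdef
  have hBase1 : (1:ℝ) ≤ max 1 (9/q) := le_max_left _ _
  have hM0 : 0 < M := lt_of_lt_of_le one_pos (le_trans (one_le_pow₀ hBase1) (le_max_right _ _))
  have hB : ∀ m : ℕ, (hpTotal m : ℝ) ≤ M * q ^ m := by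
    intro m
    by_cases hm : N ≤ m + 1
    · have h1 := hP (m+1) hm
      have h2 := le_hpPartition_lift (m := m) hy.le
      have h3 : y * (hpTotal m : ℝ) ≤ q^(m+1) := h2.trans h1
      have hq' : (hpTotal m : ℝ) ≤ (q/y) * q^m := by
        rw [div_mul_eq_mul_div, le_div_iff₀ hy, ← pow_succ']
        linarith
      exact hq'.trans (mul_le_mul_of_nonneg_right (le_max_left _ _) (by positivity))
    · push_neg at hm
      have hmN : m ≤ N := by omega
      have h9 : (hpTotal m : ℝ) ≤ 9 ^ m := by exact_mod_cast hpTotal_le m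
      have h10 : (9:ℝ)^m ≤ (max 1 (9/q))^N * q^m := by
        have e1 : (9:ℝ)^m = (9/q)^m * q^m := by
          rw [div_pow, div_mul_cancel₀]
          exact pow_ne_zero _ (ne_of_gt hq0)
        rw [e1]
        apply mul_le_mul_of_nonneg_right _ (by positivity)
        calc ((9:ℝ)/q)^m ≤ (max 1 (9/q))^m := by
              apply pow_le_pow_left₀ (by positivity) (le_max_right _ _)
          _ ≤ (max 1 (9/q))^N := pow_le_pow_right₀ hBase1 hmN
      calc (hpTotal m : ℝ) ≤ (max 1 (9/q))^N * q^m := h9.trans h10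
        _ ≤ M * q^m := mul_le_mul_of_nonneg_right (le_max_right _ _) (by positivity)
  have hc : ∀ n : ℕ, (sawCount 2 n : ℝ) ≤ M^2 * ((n:ℝ)+1) * q^n := by
    intro n
    have h1 : (sawCount 2 n : ℝ)
        ≤ ∑ j ∈ Finset.range (n+1), (hpTotal j : ℝ) * (hpTotal (n-j) : ℝ) := by
      have := split n
      have hcast : ((∑ j ∈ Finset.range (n+1), hpTotal j * hpTotal (n-j) : ℕ) : ℝ)
          = ∑ j ∈ Finset.range (n+1), (hpTotal j : ℝ) * (hpTotal (n-j) : ℝ) := by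
        push_cast; ring
      rw [← hcast]
      exact_mod_cast this
    have h2 : ∀ j ∈ Finset.range (n+1),
        (hpTotal j:ℝ)*(hpTotal (n-j):ℝ) ≤ M^2 * q^n := by
      intro j hj
      have hjn : j ≤ n := by have := Finset.mem_range.mp hj; omega
      have e : q^j * q^(n-j) = q^n := by rw [← pow_add]; congr 1; omega
      calc (hpTotal j:ℝ)*(hpTotal (n-j):ℝ) ≤ (M*q^j)*(M*q^(n-j)) :=
            mul_le_mul (hB j) (hB (n-j)) (Nat.cast_nonneg _) (by positivity)
        _ = M^2 * (q^j*q^(n-j)) := by ring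
        _ = M^2 * q^n := by rw [e]
    calc (sawCount 2 n : ℝ) ≤ _ := h1
      _ ≤ ∑ _j ∈ Finset.range (n+1), M^2 * q^n := Finset.sum_le_sum h2
      _ = ((n:ℝ)+1) * (M^2 * q^n) := by
          rw [Finset.sum_const, Finset.card_range, nsmul_eq_mul]
          push_cast; ring
      _ = M^2 * ((n:ℝ)+1) * q^n := by ring
  have hrgt : 1 < (q + ε/2)/q := (one_lt_div hq0).mpr (by linarith)
  have hgeom := ev_linear_le_geom (M^2) hrgt
  have hev2 : ∀ᶠ n in atTop, aseq n ≤ q + ε/2 := by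
    filter_upwards [hgeom, Filter.eventually_ge_atTop 1] with n h1 hn1
    have h2 : (sawCount 2 n : ℝ) ≤ ((q+ε/2)/q)^n * q^n := by
      calc (sawCount 2 n : ℝ) ≤ M^2 * ((n:ℝ)+1) * q^n := hc n
        _ ≤ ((q+ε/2)/q)^n * q^n := mul_le_mul_of_nonneg_right h1 (by positivity)
    have h3 : ((q+ε/2)/q)^n * q^n = (q+ε/2)^n := by
      rw [← mul_pow, div_mul_cancel₀ _ (ne_of_gt hq0)]
    have h4 : aseq n ≤ ((q+ε/2)^n) ^ (1/(n:ℝ)) :=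
      Real.rpow_le_rpow (Nat.cast_nonneg _) (h2.trans h3.le) (by positivity)
    rwa [one_div, Real.pow_rpow_inv_natCast (by linarith) (by omega)] at h4
  have hfin := le_of_tendsto hμ hev2
  rw [hqdef] at hfin
  linarith

open Filter in
lemma upper_aux {μ : ℝ} (hμ' : Tendsto aseq atTop (nhds μ)) :
    ∀ z : ℝ, 0 < z → z ≤ sSup {t : ℝ | 0 < t ∧ Lf t ≤ μ} → Lf z ≤ μ := by
  have hmu1 : 1 ≤ μ := one_le_mu hμ'
  have hμpos : 0 < μ := lt_of_lt_of_le one_pos hmu1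
  set S : Set ℝ := {t | 0 < t ∧ Lf t ≤ μ} with hS
  have h1S : (1:ℝ) ∈ S := ⟨one_pos, Lf_one_le hμ'⟩
  have hSb : ∀ t ∈ S, t ≤ μ := by
    intro t ht
    by_contra hlt
    push_neg at hlt
    have h1t : 1 ≤ t := le_trans hmu1 hlt.le
    have h2 := le_Lf_self h1t
    have h3 := ht.2
    linarith
  have hbdd : BddAbove S := ⟨μ, fun t ht => hSb t ht⟩
  have hne : S.Nonempty := ⟨1, h1S⟩
  set yc := sSup S with hyc
  have hyc1 : 1 ≤ yc := le_csSup hbdd h1S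
  have hycpos : 0 < yc := lt_of_lt_of_le one_pos hyc1
  intro z hz hzyc
  apply le_of_forall_pos_le_add
  intro ε hε
  set s := Real.sqrt (μ/(μ+ε)) with hsdef
  have hs2 : s^2 = μ/(μ+ε) := Real.sq_sqrt (by positivity)
  have hsqpos : 0 < s := Real.sqrt_pos.mpr (by positivity)
  have hsq1 : s < 1 := by
    rw [hsdef, show (1:ℝ) = Real.sqrt 1 from Real.sqrt_one.symm]
    exact Real.sqrt_lt_sqrt (by positivity) ((div_lt_one (by linarith)).mpr (by linarith))
  set t := yc * s with ht
  have htpos : 0 < t := by positivity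
  have htyc : t < yc := by nlinarith
  obtain ⟨y', hy'S, hty'⟩ := exists_lt_of_lt_csSup hne htyc
  have hy'pos : 0 < y' := hy'S.1
  by_cases hcase : z ≤ y'
  · exact le_trans (Lf_mono hz hcase) (by linarith [hy'S.2])
  · push_neg at hcase
    have hr := Lf_ratio (μr := 0) hy'pos hcase.le
    have h2 : z / y' ≤ yc / t := div_le_div₀ hycpos.le hzyc htpos hty'.le
    have h3 : (z/y')^2 ≤ (yc/t)^2 := pow_le_pow_left₀ (by positivity) h2 2
    have h4 : (yc/t)^2 * μ = μ + ε := by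
      rw [ht, div_pow, mul_pow, hs2]
      field_simp
    have h5 : (z/y')^2 * Lf y' ≤ (yc/t)^2 * μ :=
      mul_le_mul h3 hy'S.2 (Lf_nonneg hy'pos) (by positivity)
    calc Lf z ≤ (z/y')^2 * Lf y' := hr
      _ ≤ (yc/t)^2 * μ := h5
      _ = μ + ε := h4

end SAWAux

open SAWAux in
/-- there is a critical value `y_c` with `1 ≤ y_c ≤ μ²` such that
`μ(y) = μ` for `0 < y ≤ y_c` and `μ(y) > μ` for `y > y_c`. -/
theorem hp_critical_fugacity (μ : ℝ)
    (hμ : Filter.Tendsto (fun n : ℕ => (sawCount 2 n : ℝ) ^ (1 / (n : ℝ)))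
      Filter.atTop (nhds μ)) :
    ∃ yc : ℝ, 1 ≤ yc ∧ yc ≤ μ ^ 2 ∧
      ∀ y μy : ℝ, 0 < y →
        Filter.Tendsto (fun n : ℕ => hpPartition n y ^ (1 / (n : ℝ)))
          Filter.atTop (nhds μy) →
        (y ≤ yc → μy = μ) ∧ (yc < y → μ < μy) := by
  classical
  have hμ' : Filter.Tendsto aseq Filter.atTop (nhds μ) := hμ
  have hmu1 : 1 ≤ μ := one_le_mu hμ'
  set S : Set ℝ := {t | 0 < t ∧ Lf t ≤ μ} with hS
  have h1S : (1:ℝ) ∈ S := ⟨one_pos, Lf_one_le hμ'⟩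
  have hSb : ∀ t ∈ S, t ≤ μ := by
    intro t ht
    by_contra hlt
    push_neg at hlt
    have h1t : 1 ≤ t := le_trans hmu1 hlt.le
    have h2 := le_Lf_self h1t
    have h3 := ht.2
    linarith
  have hbdd : BddAbove S := ⟨μ, fun t ht => hSb t ht⟩
  have hne : S.Nonempty := ⟨1, h1S⟩
  refine ⟨sSup S, le_csSup hbdd h1S, by nlinarith [csSup_le hne hSb], ?_⟩
  intro y μy hy hT
  have hTa : Filter.Tendsto (bseq y) Filter.atTop (nhds μy) := hT
  have hLy : Lf y = μy := hTa.limsup_eq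
  constructor
  · intro hyyc
    have h1 : Lf y ≤ μ := upper_aux hμ' y hy hyyc
    have h2 : μ ≤ Lf y := mu_le_Lf hμ' hy
    rw [← hLy]
    linarith
  · intro hycy
    have hnotS : y ∉ S := fun hyS => absurd (le_csSup hbdd hyS) (not_le.mpr hycy)
    have hgt : ¬ (Lf y ≤ μ) := fun h => hnotS ⟨hy, h⟩
    push_neg at hgt
    rw [← hLy]
    exact hgt
end

section
/- For every real b > 0, ∫_{-1}^{1} (u² + 1)^{-b} (1 − u²)^{b−1} du = √π · Γ(b/2) / (2 Γ(b/2 + 1/2)). -/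
open MeasureTheory Set intervalIntegral

/-- Real Beta integral in terms of the real Gamma function. -/
private lemma real_beta_integral {u v : ℝ} (hu : 0 < u) (hv : 0 < v) :
    ∫ x in (0:ℝ)..1, x ^ (u - 1) * (1 - x) ^ (v - 1) =
      Real.Gamma u * Real.Gamma v / Real.Gamma (u + v) := by
  have key : Complex.Gamma u * Complex.Gamma v =
      Complex.Gamma (u + v) * Complex.betaIntegral u v :=
    Complex.Gamma_mul_Gamma_eq_betaIntegral (by simpa using hu) (by simpa using hv)
  have hbeta : Complex.betaIntegral u v =
      ((∫ x in (0:ℝ)..1, x ^ (u - 1) * (1 - x) ^ (v - 1) : ℝ) : ℂ) := by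
    rw [Complex.betaIntegral, ← intervalIntegral.integral_ofReal]
    refine intervalIntegral.integral_congr fun x hx => ?_
    rw [uIcc_of_le (by norm_num : (0:ℝ) ≤ 1)] at hx
    push_cast
    rw [Complex.ofReal_cpow hx.1 (u - 1),
      Complex.ofReal_cpow (by linarith [hx.2] : (0:ℝ) ≤ 1 - x) (v - 1)]
    push_cast
    ring
  rw [hbeta, ← Complex.ofReal_add, Complex.Gamma_ofReal, Complex.Gamma_ofReal,
    Complex.Gamma_ofReal, ← Complex.ofReal_mul, ← Complex.ofReal_mul] at key
  have key' : Real.Gamma u * Real.Gamma v =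
      Real.Gamma (u + v) * ∫ x in (0:ℝ)..1, x ^ (u - 1) * (1 - x) ^ (v - 1) := by
    exact_mod_cast key
  have hne : Real.Gamma (u + v) ≠ 0 := (Real.Gamma_pos_of_pos (by linarith)).ne'
  field_simp [key']
  rw [key']; ring

/-- Integrability of the Beta integrand. -/
private lemma beta_integrand_integrable {u v : ℝ} (hu : 0 < u) (hv : 0 < v) :
    IntervalIntegrable (fun x : ℝ => x ^ (u - 1) * (1 - x) ^ (v - 1)) volume 0 1 := by
  have hc := Complex.betaIntegral_convergent (u := (u:ℂ)) (v := (v:ℂ))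
    (by simpa using hu) (by simpa using hv)
  rw [intervalIntegrable_iff_integrableOn_Ioc_of_le (by norm_num)] at hc ⊢
  have hre : IntegrableOn (fun x : ℝ => Complex.re ((x:ℂ) ^ ((u:ℂ) - 1) * (1 - (x:ℂ)) ^ ((v:ℂ) - 1))) (Ioc 0 1) volume := hc.re
  refine hre.congr_fun (fun x hx => ?_) measurableSet_Ioc
  have h1 : (0:ℝ) ≤ x := hx.1.le
  have h2 : (0:ℝ) ≤ 1 - x := by linarith [hx.2]
  have : ((x:ℂ) ^ ((u:ℂ) - 1) * (1 - (x:ℂ)) ^ ((v:ℂ) - 1)) =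
      ((x ^ (u - 1) * (1 - x) ^ (v - 1) : ℝ) : ℂ) := by
    push_cast
    rw [Complex.ofReal_cpow h1 (u - 1), Complex.ofReal_cpow h2 (v - 1)]
    push_cast
    ring
  beta_reduce
  rw [this, Complex.ofReal_re]

/-- Integrability of the main integrand on `[0,1]`. -/
private lemma saw_integrand_integrable {b : ℝ} (hb : 0 < b) :
    IntervalIntegrable (fun u : ℝ => (u ^ 2 + 1) ^ (-b) * (1 - u ^ 2) ^ (b - 1)) volume 0 1 := by
  have h1 : IntervalIntegrable (fun x : ℝ => (1 - x) ^ (b - 1)) volume 0 1 := by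
    have := (intervalIntegral.intervalIntegrable_rpow' (a := 0) (b := 1) (r := b - 1)
      (by linarith)).comp_sub_left 1
    simpa using this.symm
  have hc : ContinuousOn (fun x : ℝ => (x ^ 2 + 1) ^ (-b) * (1 + x) ^ (b - 1))
      (uIcc (0:ℝ) 1) := by
    rw [uIcc_of_le (by norm_num : (0:ℝ) ≤ 1)]
    apply ContinuousOn.mul
    · exact ContinuousOn.rpow_const (by fun_prop) (fun x _ => Or.inl (by positivity))
    · refine ContinuousOn.rpow_const (by fun_prop) (fun x hx => Or.inl ?_)
      have := hx.1
      positivity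
  have h2 := h1.continuousOn_mul hc
  rw [intervalIntegrable_iff_integrableOn_Ioc_of_le (by norm_num)] at h2 ⊢
  refine h2.congr_fun (fun x hx => ?_) measurableSet_Ioc
  have hx1 : (0:ℝ) ≤ 1 - x := by linarith [hx.2]
  have hx2 : (0:ℝ) ≤ 1 + x := by linarith [hx.1.le]
  have h3 : (1 - x ^ 2 : ℝ) = (1 + x) * (1 - x) := by ring
  rw [h3, Real.mul_rpow hx2 hx1]
  ring

/-- The key pointwise change-of-variables identity on `(0,1)`. -/
private lemma saw_pointwise {b x : ℝ} (hb : 0 < b) (hx0 : 0 < x) (hx1 : x < 1) :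
    (8 * x * (1 - x ^ 2) / (1 + x ^ 2) ^ 3) *
      ((4 * x ^ 2 / (1 + x ^ 2) ^ 2) ^ ((1:ℝ)/2 - 1) *
        (1 - 4 * x ^ 2 / (1 + x ^ 2) ^ 2) ^ (b / 2 - 1)) =
      4 * ((x ^ 2 + 1) ^ (-b) * (1 - x ^ 2) ^ (b - 1)) := by
  have hA : (0:ℝ) < 1 + x ^ 2 := by positivity
  have hP : (0:ℝ) < 1 - x ^ 2 := by nlinarith
  set A := 1 + x ^ 2 with hAdef
  set P := 1 - x ^ 2 with hPdef
  have hq : (0:ℝ) < 2 * x / A := by positivity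
  have e1 : 4 * x ^ 2 / A ^ 2 = (2 * x / A) ^ (2:ℕ) := by
    field_simp
    ring
  have e2 : 1 - 4 * x ^ 2 / A ^ 2 = (P / A) ^ (2:ℕ) := by
    rw [hAdef, hPdef]
    field_simp
    ring
  have e3 : (4 * x ^ 2 / A ^ 2) ^ ((1:ℝ)/2 - 1) = (2 * x / A)⁻¹ := by
    rw [e1, ← Real.rpow_natCast (2 * x / A) 2, ← Real.rpow_mul hq.le,
      show ((2:ℕ):ℝ) * ((1:ℝ)/2 - 1) = -1 by norm_num, Real.rpow_neg_one]
  have e4 : (1 - 4 * x ^ 2 / A ^ 2) ^ (b / 2 - 1) = (P / A) ^ (b - 2) := by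
    rw [e2, ← Real.rpow_natCast (P / A) 2, ← Real.rpow_mul (by positivity)]
    ring_nf
  rw [e3, e4, Real.div_rpow hP.le hA.le]
  have hPe : P ^ (b - 2) * P = P ^ (b - 1) := by
    rw [← Real.rpow_add_one hP.ne' (b - 2)]
    ring_nf
  have hAe : (x ^ 2 + 1) ^ (-b) = (A ^ (b - 2) * A ^ (2:ℕ))⁻¹ := by
    rw [← Real.rpow_natCast A 2, ← Real.rpow_add hA]
    norm_num
    rw [show (x ^ 2 + 1 : ℝ) = A by rw [hAdef]; ring, ← Real.rpow_neg hA.le]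
  rw [hAe]
  have h1 : A ^ (b-2) ≠ 0 := (Real.rpow_pos_of_pos hA _).ne'
  have h2 : P ^ (b-2) ≠ 0 := (Real.rpow_pos_of_pos hP _).ne'
  field_simp
  rw [← hPe]
  ring

/-- for every real `b > 0`,
`∫₋₁^1 (u²+1)^{−b} (1−u²)^{b−1} du = √π Γ(b/2) / (2 Γ(b/2 + 1/2))`. -/
theorem saw_hitting_denominator_integral (b : ℝ) (hb : 0 < b) :
    (∫ u in (-1 : ℝ)..1, (u ^ 2 + 1) ^ (-b) * (1 - u ^ 2) ^ (b - 1)) =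
      Real.sqrt Real.pi * Real.Gamma (b / 2) / (2 * Real.Gamma (b / 2 + 1 / 2)) := by
  have hI0 := saw_integrand_integrable hb
  have hIneg : IntervalIntegrable
      (fun u : ℝ => (u ^ 2 + 1) ^ (-b) * (1 - u ^ 2) ^ (b - 1)) volume (-1) 0 := by
    have := (hI0.comp_sub_left 0).symm
    simp only [zero_sub, neg_sq] at this
    simpa using this
  have hflip : (∫ u in (-1:ℝ)..0, (u ^ 2 + 1) ^ (-b) * (1 - u ^ 2) ^ (b - 1)) =
      ∫ u in (0:ℝ)..1, (u ^ 2 + 1) ^ (-b) * (1 - u ^ 2) ^ (b - 1) := by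
    have h := intervalIntegral.integral_comp_neg (a := (0:ℝ)) (b := 1)
      (fun u => (u ^ 2 + 1) ^ (-b) * (1 - u ^ 2) ^ (b - 1))
    simp only [neg_zero, neg_sq] at h
    exact h.symm
  have hsplit : (∫ u in (-1:ℝ)..1, (u ^ 2 + 1) ^ (-b) * (1 - u ^ 2) ^ (b - 1)) =
      2 * ∫ u in (0:ℝ)..1, (u ^ 2 + 1) ^ (-b) * (1 - u ^ 2) ^ (b - 1) := by
    rw [← intervalIntegral.integral_add_adjacent_intervals hIneg hI0, hflip]
    ring
  -- the substitution x ↦ 4x²/(1+x²)²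
  set φ : ℝ → ℝ := fun x => 4 * x ^ 2 / (1 + x ^ 2) ^ 2 with hφ
  set φ' : ℝ → ℝ := fun x => 8 * x * (1 - x ^ 2) / (1 + x ^ 2) ^ 3 with hφ'
  set g : ℝ → ℝ := fun t => t ^ ((1:ℝ)/2 - 1) * (1 - t) ^ (b / 2 - 1) with hg
  have hφc : ContinuousOn φ (uIcc (0:ℝ) 1) := by
    apply Continuous.continuousOn
    exact (continuous_const.mul (continuous_pow 2)).div (by fun_prop) (fun x => by positivity)
  have hφd : ∀ x ∈ Ioo (min (0:ℝ) 1) (max (0:ℝ) 1),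
      HasDerivWithinAt φ (φ' x) (Ioi x) x := by
    intro x _
    have hx2 : HasDerivAt (fun x : ℝ => x ^ 2) (2 * x) x := by
      simpa using hasDerivAt_pow 2 x
    have hnum : HasDerivAt (fun x : ℝ => 4 * x ^ 2) (8 * x) x := by
      rw [show (8:ℝ) * x = 4 * (2 * x) by ring]
      exact hx2.const_mul (4:ℝ)
    have hden : HasDerivAt (fun x : ℝ => (1 + x ^ 2) ^ 2) (2 * (1 + x ^ 2) * (2 * x)) x := by
      have h : HasDerivAt (fun x : ℝ => 1 + x ^ 2) (2 * x) x := by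
        simpa using hx2.const_add 1
      simpa using h.fun_pow 2
    have hdiv := hnum.div hden (by positivity)
    refine HasDerivAt.hasDerivWithinAt ?_
    refine hdiv.congr_deriv ?_
    rw [hφ']
    field_simp
    ring
  have hmapIoo : φ '' Ioo (min (0:ℝ) 1) (max (0:ℝ) 1) ⊆ Ioo 0 1 := by
    rintro t ⟨x, hx, rfl⟩
    simp only [min_eq_left, max_eq_right, zero_le_one] at hx
    constructor
    · have := hx.1
      positivity
    · rw [hφ]
      rw [div_lt_one (by positivity)]
      have h : 0 < 1 - x ^ 2 := by nlinarith [hx.1, hx.2]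
      nlinarith [mul_pos h h]
  have hgc : ContinuousOn g (φ '' Ioo (min (0:ℝ) 1) (max (0:ℝ) 1)) := by
    refine ContinuousOn.mono ?_ hmapIoo
    apply ContinuousOn.mul
    · exact ContinuousOn.rpow_const continuousOn_id (fun t ht => Or.inl ht.1.ne')
    · exact ContinuousOn.rpow_const (by fun_prop)
        (fun t ht => Or.inl (ne_of_gt (by linarith [ht.2])))
  have hg1 : IntegrableOn g (φ '' uIcc (0:ℝ) 1) volume := by
    have hbeta := beta_integrand_integrable (u := 1/2) (v := b/2) (by norm_num) (by linarith)
    have hIcc : IntegrableOn g (Icc (0:ℝ) 1) volume := by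
      rw [integrableOn_Icc_iff_integrableOn_Ioc]
      rw [intervalIntegrable_iff_integrableOn_Ioc_of_le (by norm_num)] at hbeta
      exact hbeta
    refine hIcc.mono_set ?_
    rintro t ⟨x, hx, rfl⟩
    rw [uIcc_of_le (by norm_num : (0:ℝ) ≤ 1)] at hx
    constructor
    · positivity
    · rw [hφ, div_le_one (by positivity)]
      nlinarith [sq_nonneg (1 - x ^ 2)]
  have hf4 : IntegrableOn
      (fun x : ℝ => 4 * ((x ^ 2 + 1) ^ (-b) * (1 - x ^ 2) ^ (b - 1))) (uIcc (0:ℝ) 1) volume := by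
    rw [uIcc_of_le (by norm_num : (0:ℝ) ≤ 1), integrableOn_Icc_iff_integrableOn_Ioc]
    exact ((intervalIntegrable_iff_integrableOn_Ioc_of_le (by norm_num)).mp hI0).const_mul 4
  have hcount : ∀ᵐ x : ℝ ∂volume, x ∉ ({0, 1} : Set ℝ) :=
    (Set.to_countable _).ae_notMem _
  have hg2 : IntegrableOn (fun x => φ' x • (g ∘ φ) x) (uIcc (0:ℝ) 1) volume := by
    refine hf4.congr ?_
    filter_upwards [ae_restrict_of_ae hcount, ae_restrict_mem measurableSet_uIcc]
      with x hx hmem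
    rw [uIcc_of_le (by norm_num : (0:ℝ) ≤ 1)] at hmem
    simp only [Set.mem_insert_iff, Set.mem_singleton_iff, not_or] at hx
    have hx0 : 0 < x := lt_of_le_of_ne hmem.1 (Ne.symm hx.1)
    have hx1 : x < 1 := lt_of_le_of_ne hmem.2 hx.2
    rw [smul_eq_mul, Function.comp_apply, hg, hφ, hφ']
    exact (saw_pointwise hb hx0 hx1).symm
  have hsub := intervalIntegral.integral_comp_smul_deriv''' (a := (0:ℝ)) (b := 1)
    hφc hφd hgc hg1 hg2
  have hφ0 : φ 0 = 0 := by rw [hφ]; norm_num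
  have hφ1 : φ 1 = 1 := by rw [hφ]; norm_num
  rw [hφ0, hφ1] at hsub
  have hL : (∫ x in (0:ℝ)..1, φ' x • (g ∘ φ) x) =
      4 * ∫ x in (0:ℝ)..1, (x ^ 2 + 1) ^ (-b) * (1 - x ^ 2) ^ (b - 1) := by
    rw [← intervalIntegral.integral_const_mul]
    refine intervalIntegral.integral_congr_ae ?_
    filter_upwards [hcount] with x hx hmem
    rw [Set.uIoc_of_le (by norm_num : (0:ℝ) ≤ 1)] at hmem
    simp only [Set.mem_insert_iff, Set.mem_singleton_iff, not_or] at hx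
    have hx0 : 0 < x := hmem.1
    have hx1 : x < 1 := lt_of_le_of_ne hmem.2 hx.2
    rw [smul_eq_mul, Function.comp_apply, hg, hφ, hφ']
    exact saw_pointwise hb hx0 hx1
  have hbval : (∫ t in (0:ℝ)..1, g t) =
      Real.Gamma (1/2) * Real.Gamma (b/2) / Real.Gamma (1/2 + b/2) := by
    rw [hg]
    exact real_beta_integral (by norm_num) (by linarith)
  rw [hL, hbval] at hsub
  have hG : Real.Gamma (b / 2 + 1 / 2) ≠ 0 :=
    (Real.Gamma_pos_of_pos (by linarith)).ne'
  rw [hsplit]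
  rw [Real.Gamma_one_half_eq, show (1:ℝ)/2 + b/2 = b/2 + 1/2 by ring] at hsub
  field_simp at hsub ⊢
  linarith
end
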